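/- arXiv:1001.5079 — 11 statements merged into one kernel-verified Lean document; each statement's English description precedes it below -/
import Mathlib

section
/- Let m ≥ 1 and let 1 ≤ n_1 < n_2 < ... < n_m be positive integers. Define d_j = ∏_{i≠j} n_i/(n_i - n_j) for j = 1,...,m. Then the finitely supported sequence g with g = Δ^{-m}(δ^{(0)} - ∑_j d_j δ^{(n_j)}) (i.e., the unique finitely supported g with Δ^m g = δ^{(0)} - h where h = ∑_j d_j δ^{(n_j)}) satisfies ‖g‖_{ℓ^1} = (∏_{j=1}^m n_j)/m!. -/
open Finset

/-- Backward finite difference on sequences indexed by ℤ. -/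
noncomputable def bdiff (w : ℤ → ℝ) : ℤ → ℝ := fun n => w n - w (n - 1)

/-- Kronecker delta sequence supported at `k`. -/
noncomputable def kdelta (k : ℤ) : ℤ → ℝ := fun n => if n = k then 1 else 0

namespace Stmt0Aux

open Polynomial

noncomputable section

/-- truncated binomial-polynomial kernel -/
def phi (p : ℕ) (k t : ℤ) : ℝ :=
  if t ≤ k then (∏ r ∈ Finset.range p, ((k : ℝ) + 1 + r - t)) / p.factorial else 0

/-- inverse nodal weight -/
def Wt (N : ℕ) (x : ℕ → ℤ) (i : ℕ) : ℝ :=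
  (∏ j ∈ (Finset.range N).erase i, ((x i : ℝ) - (x j : ℝ)))⁻¹

def gam (p : ℕ) (x : ℕ → ℤ) (k : ℤ) : ℝ :=
  (-1)^(p+1) * ∑ i ∈ range (p+2), Wt (p+2) x i * phi p k (x i)

lemma prod_shift_sub (c : ℝ) (p : ℕ) :
    (∏ r ∈ range (p+1), (c + 1 + r)) - (∏ r ∈ range (p+1), (c + r))
      = (p+1) * ∏ r ∈ range p, (c + 1 + r) := by
  rw [Finset.prod_range_succ, Finset.prod_range_succ']
  have e : (∏ r ∈ range p, (c + ↑(r+1))) = ∏ r ∈ range p, (c + 1 + r) :=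
    Finset.prod_congr rfl (fun r _ => by push_cast; ring)
  rw [e]
  push_cast
  ring

lemma prod_one_add (p : ℕ) : (∏ r ∈ range p, ((1 : ℝ) + r)) = p.factorial := by
  induction p with
  | zero => simp
  | succ q ih => rw [Finset.prod_range_succ, ih]; push_cast [Nat.factorial_succ]; ring

lemma phi_sub_phi (p : ℕ) (k t : ℤ) :
    phi (p+1) k t - phi (p+1) (k-1) t = phi p k t := by
  unfold phi
  rcases lt_trichotomy t k with hlt | heq | hgt
  · have h1 : t ≤ k := hlt.le
    have h2 : t ≤ k - 1 := by omega
    rw [if_pos h1, if_pos h2, if_pos h1]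
    have e2 : (∏ r ∈ range (p+1), (((k-1 : ℤ) : ℝ) + 1 + r - t))
        = ∏ r ∈ range (p+1), (((k : ℝ) - t) + r) :=
      Finset.prod_congr rfl (fun r _ => by push_cast; ring)
    have e1 : (∏ r ∈ range (p+1), ((k : ℝ) + 1 + r - t))
        = ∏ r ∈ range (p+1), (((k : ℝ) - t) + 1 + r) :=
      Finset.prod_congr rfl (fun r _ => by push_cast; ring)
    have e3 : (∏ r ∈ range p, ((k : ℝ) + 1 + r - t))
        = ∏ r ∈ range p, (((k : ℝ) - t) + 1 + r) :=
      Finset.prod_congr rfl (fun r _ => by push_cast; ring)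
    rw [e1, e2, e3, div_sub_div_same, prod_shift_sub ((k : ℝ) - t) p, Nat.factorial_succ]
    have hp : (0:ℝ) < (p+1 : ℕ) := by positivity
    have hf : (0:ℝ) < (p.factorial : ℕ) := by positivity
    field_simp
    push_cast
    ring
  · subst heq
    have h2 : ¬ (t ≤ t - 1) := by omega
    rw [if_pos (le_refl t), if_neg h2, if_pos (le_refl t)]
    have e1 : (∏ r ∈ range (p+1), ((t : ℝ) + 1 + r - t)) = ∏ r ∈ range (p+1), ((1:ℝ) + r) :=
      Finset.prod_congr rfl (fun r _ => by push_cast; ring)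
    have e3 : (∏ r ∈ range p, ((t : ℝ) + 1 + r - t)) = ∏ r ∈ range p, ((1:ℝ) + r) :=
      Finset.prod_congr rfl (fun r _ => by push_cast; ring)
    rw [e1, e3, prod_one_add, prod_one_add]
    rw [div_self (by positivity), div_self (by positivity)]
    ring
  · have h1 : ¬ (t ≤ k) := by omega
    have h2 : ¬ (t ≤ k - 1) := by omega
    rw [if_neg h1, if_neg h2, if_neg h1]
    ring

lemma bdiff_phi (p : ℕ) (t : ℤ) :
    bdiff (fun k => phi (p+1) k t) = fun k => phi p k t := by
  funext k; exact phi_sub_phi p k t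

lemma phi_zero (k t : ℤ) : phi 0 k t = if t ≤ k then 1 else 0 := by
  unfold phi; simp

lemma bdiff_phi_zero (t : ℤ) :
    bdiff (fun k => phi 0 k t) = fun k => if k = t then 1 else 0 := by
  funext k
  simp only [bdiff, phi_zero]
  by_cases h : k = t
  · subst h; rw [if_pos (le_refl k), if_neg (by omega), if_pos rfl]; ring
  · by_cases h2 : t ≤ k
    · rw [if_pos h2, if_pos (by omega), if_neg h]; ring
    · rw [if_neg h2, if_neg (by omega), if_neg h]; ring

lemma phi_iter (p : ℕ) (t : ℤ) :
    bdiff^[p] (fun k => phi p k t) = fun k => phi 0 k t := by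
  induction p with
  | zero => simp
  | succ q ih =>
      rw [Function.iterate_succ_apply, bdiff_phi q t, ih]

lemma phi_iter_delta (p : ℕ) (t : ℤ) :
    bdiff^[p+1] (fun k => phi p k t) = fun k => if k = t then 1 else 0 := by
  rw [Function.iterate_succ_apply', phi_iter, bdiff_phi_zero]

/-- linear factor extraction -/
lemma phi_succ_mul (p : ℕ) (k t : ℤ) :
    phi (p+1) k t = (((k : ℝ) + (p+1) - t) / (p+1)) * phi p k t := by
  unfold phi
  by_cases h : t ≤ k
  · rw [if_pos h, if_pos h, Finset.prod_range_succ, Nat.factorial_succ]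
    have hp : (0:ℝ) < (p:ℝ)+1 := by positivity
    have hf : (0:ℝ) < (p.factorial : ℕ) := by positivity
    push_cast
    field_simp
    ring
  · rw [if_neg h, if_neg h]; ring

lemma leadingCoeff_basis {v : ℕ → ℝ} {s : Finset ℕ} (hv : Set.InjOn v s) {i : ℕ} (hi : i ∈ s) :
    (Lagrange.basis s v i).coeff (s.card - 1) = (∏ j ∈ s.erase i, (v i - v j))⁻¹ := by
  have hdeg := Lagrange.natDegree_basis hv hi
  rw [← hdeg, Polynomial.coeff_natDegree]
  unfold Lagrange.basis
  rw [Polynomial.leadingCoeff_prod]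
  rw [← Finset.prod_inv_distrib]
  apply Finset.prod_congr rfl
  intro j hj
  have hne : v i ≠ v j := fun hvv =>
    (Finset.mem_erase.mp hj).1 (hv (Finset.mem_of_mem_erase hj) hi hvv.symm)
  unfold Lagrange.basisDivisor
  have h1 : (Polynomial.C (v i - v j)⁻¹ * (Polynomial.X - Polynomial.C (v j))).leadingCoeff
      = (v i - v j)⁻¹ := by
    rw [Polynomial.leadingCoeff_mul, Polynomial.leadingCoeff_C,
      Polynomial.leadingCoeff_X_sub_C, mul_one]
  rw [h1]

lemma lagrange_sum {N : ℕ} {v : ℕ → ℝ} (hv : Set.InjOn v (range (N+1)))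
    (q : ℝ[X]) (hq : q.degree < ((N+1 : ℕ) : WithBot ℕ)) :
    ∑ i ∈ range (N+1), (∏ j ∈ (range (N+1)).erase i, (v i - v j))⁻¹ * q.eval (v i)
      = q.coeff N := by
  have hcard : (range (N+1)).card = N + 1 := Finset.card_range _
  have hint := Lagrange.eq_interpolate (f := q) hv (by rw [hcard]; exact_mod_cast hq)
  conv_rhs => rw [hint]
  rw [Lagrange.interpolate_apply, Polynomial.finset_sum_coeff]
  apply Finset.sum_congr rfl
  intro i hi
  rw [Polynomial.coeff_C_mul]
  have := leadingCoeff_basis hv hi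
  rw [hcard] at this
  simp only [Nat.add_sub_cancel] at this
  rw [this, mul_comm]

def Ppoly (p : ℕ) (k : ℤ) : ℝ[X] := ∏ r ∈ range p, (Polynomial.C ((k:ℝ)+1+r) - Polynomial.X)

lemma Ppoly_factor_ne (a : ℝ) : Polynomial.C a - Polynomial.X ≠ (0 : ℝ[X]) := by
  have : (Polynomial.C a - Polynomial.X) = -(Polynomial.X - Polynomial.C a) := by ring
  rw [this, neg_ne_zero]
  exact Polynomial.X_sub_C_ne_zero a

lemma Ppoly_factor_natDegree (a : ℝ) : (Polynomial.C a - Polynomial.X).natDegree = 1 := by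
  have : (Polynomial.C a - Polynomial.X) = -(Polynomial.X - Polynomial.C a) := by ring
  rw [this, Polynomial.natDegree_neg, Polynomial.natDegree_X_sub_C]

lemma Ppoly_factor_leadingCoeff (a : ℝ) : (Polynomial.C a - Polynomial.X).leadingCoeff = -1 := by
  have : (Polynomial.C a - Polynomial.X) = -(Polynomial.X - Polynomial.C a) := by ring
  rw [this, Polynomial.leadingCoeff_neg, Polynomial.leadingCoeff_X_sub_C]

lemma natDegree_Ppoly (p : ℕ) (k : ℤ) : (Ppoly p k).natDegree = p := by
  unfold Ppoly
  rw [Polynomial.natDegree_prod _ _ (fun r _ => Ppoly_factor_ne _)]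
  calc ∑ r ∈ range p, (Polynomial.C ((k:ℝ)+1+(r:ℝ)) - Polynomial.X).natDegree
      = ∑ _r ∈ range p, 1 := Finset.sum_congr rfl (fun r _ => Ppoly_factor_natDegree _)
    _ = p := by simp

lemma Ppoly_ne_zero (p : ℕ) (k : ℤ) : Ppoly p k ≠ 0 :=
  Finset.prod_ne_zero_iff.mpr (fun r _ => Ppoly_factor_ne _)

lemma coeff_Ppoly_self (p : ℕ) (k : ℤ) : (Ppoly p k).coeff p = (-1)^p := by
  have h : (Ppoly p k).natDegree = p := natDegree_Ppoly p k
  have hl : (Ppoly p k).leadingCoeff = (-1)^p := by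
    unfold Ppoly
    rw [Polynomial.leadingCoeff_prod]
    calc ∏ r ∈ range p, (Polynomial.C ((k:ℝ)+1+(r:ℝ)) - Polynomial.X).leadingCoeff
        = ∏ _r ∈ range p, (-1:ℝ) := Finset.prod_congr rfl (fun r _ => Ppoly_factor_leadingCoeff _)
      _ = (-1)^p := by rw [Finset.prod_const, card_range]
  obtain ⟨Q, hQ⟩ : ∃ Q, Ppoly p k = Q := ⟨_, rfl⟩
  rw [hQ] at h hl ⊢
  rw [← h, Polynomial.coeff_natDegree, h]
  exact hl

lemma eval_Ppoly (p : ℕ) (k : ℤ) (t : ℝ) :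
    (Ppoly p k).eval t = ∏ r ∈ range p, ((k:ℝ) + 1 + r - t) := by
  unfold Ppoly
  rw [Polynomial.eval_prod]
  simp

lemma phi_eq_poly (p : ℕ) (k t : ℤ) (h : t ≤ k + p) :
    phi p k t = (Ppoly p k).eval (t : ℝ) / p.factorial := by
  unfold phi
  by_cases h1 : t ≤ k
  · rw [if_pos h1, eval_Ppoly]
  · rw [if_neg h1, eval_Ppoly]
    have hmem : (t - k - 1).toNat ∈ range p := by
      rw [Finset.mem_range]; omega
    rw [Finset.prod_eq_zero hmem]
    · simp
    · have h2 : ((t - k - 1).toNat : ℝ) = (t:ℝ) - k - 1 := by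
        have h3 := Int.toNat_of_nonneg (show (0:ℤ) ≤ t - k - 1 by omega)
        exact_mod_cast congrArg (Int.cast : ℤ → ℝ) h3
      rw [h2]; ring

lemma injOn_of_mono {N : ℕ} {x : ℕ → ℤ} (hx : ∀ i j, i < j → j < N+1 → x i < x j) :
    Set.InjOn (fun i => ((x i : ℤ) : ℝ)) (range (N+1)) := by
  intro i hi j hj hij
  simp only [Finset.coe_range, Set.mem_Iio] at hi hj
  simp only at hij
  by_contra hne
  rcases Nat.lt_or_ge i j with hlt | hge
  · have h1 := hx i j hlt hj
    have h2 : ((x i : ℤ) : ℝ) < ((x j : ℤ) : ℝ) := by exact_mod_cast h1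
    exact absurd hij (ne_of_lt h2)
  · have hlt : j < i := by omega
    have h1 := hx j i hlt hi
    have h2 : ((x j : ℤ) : ℝ) < ((x i : ℤ) : ℝ) := by exact_mod_cast h1
    exact absurd hij.symm (ne_of_lt h2)

/-- main Lagrange-sum evaluation of the truncated kernel when truncation is invisible -/
lemma lagr_phi {N p : ℕ} (x : ℕ → ℤ) (hx : ∀ i j, i < j → j < N+1 → x i < x j) (k : ℤ)
    (hk : ∀ i, i < N+1 → x i ≤ k + p) (hp : p ≤ N) :
    ∑ i ∈ range (N+1), Wt (N+1) x i * phi p k (x i)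
      = (if p = N then (-1:ℝ)^p / p.factorial else 0) := by
  have hdeg : (Ppoly p k).degree < ((N+1 : ℕ) : WithBot ℕ) := by
    rw [Polynomial.degree_eq_natDegree (Ppoly_ne_zero p k), natDegree_Ppoly]
    exact_mod_cast Nat.lt_succ_of_le hp
  have key := lagrange_sum (injOn_of_mono hx) (Ppoly p k) hdeg
  have e1 : ∑ i ∈ range (N+1), Wt (N+1) x i * phi p k (x i)
      = (∑ i ∈ range (N+1), (∏ j ∈ (range (N+1)).erase i,
          (((x i : ℤ):ℝ) - ((x j : ℤ):ℝ)))⁻¹ * (Ppoly p k).eval ((x i : ℤ):ℝ)) / p.factorial := by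
    rw [Finset.sum_div]
    apply Finset.sum_congr rfl
    intro i hi
    rw [Finset.mem_range] at hi
    rw [phi_eq_poly p k (x i) (hk i hi), Wt]
    ring
  rw [e1, key]
  by_cases hpN : p = N
  · subst hpN
    rw [if_pos rfl, coeff_Ppoly_self]
  · rw [if_neg hpN]
    rw [Polynomial.coeff_eq_zero_of_natDegree_lt, zero_div]
    rw [natDegree_Ppoly]
    omega

lemma gam_hi {p : ℕ} {x : ℕ → ℤ} (hx : ∀ i j, i < j → j < p+2 → x i < x j) {k : ℤ}
    (hk : x (p+1) ≤ k + p) : gam p x k = 0 := by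
  unfold gam
  have : ∑ i ∈ range (p+2), Wt (p+2) x i * phi p k (x i) = 0 := by
    have := lagr_phi (N := p+1) (p := p) x hx k
      (fun i hi => by
        rcases Nat.lt_or_ge i (p+1) with h | h
        · exact le_trans (hx i (p+1) h (by omega)).le hk
        · have : i = p+1 := by omega
          rw [this]; exact hk)
      (by omega)
    rw [this, if_neg (by omega)]
  rw [this, mul_zero]

lemma gam_lo {p : ℕ} {x : ℕ → ℤ} (hx : ∀ i j, i < j → j < p+2 → x i < x j) {k : ℤ}
    (hk : k < x 0) : gam p x k = 0 := by
  unfold gam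
  have : ∑ i ∈ range (p+2), Wt (p+2) x i * phi p k (x i) = 0 := by
    apply Finset.sum_eq_zero
    intro i hi
    rw [Finset.mem_range] at hi
    have hxi : ¬ (x i ≤ k) := by
      rcases Nat.eq_zero_or_pos i with rfl | hpos
      · omega
      · have := hx 0 i hpos hi
        omega
    unfold phi
    rw [if_neg hxi, mul_zero]
  rw [this, mul_zero]

lemma Wt_shift {N : ℕ} {x : ℕ → ℤ} (hx : ∀ i j, i < j → j < N+2 → x i < x j)
    {j : ℕ} (hj : j < N+1) :
    Wt (N+2) x (j+1) * ((x (j+1) : ℝ) - (x 0 : ℝ)) = Wt (N+1) (x ∘ Nat.succ) j := by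
  have h0S : (0:ℕ) ∈ (range (N+2)).erase (j+1) := by
    simp [Finset.mem_erase, Finset.mem_range]
  have hsplit := (Finset.mul_prod_erase _ (fun j' => ((x (j+1) : ℝ) - (x j' : ℝ))) h0S).symm
  have hset : ((range (N+2)).erase (j+1)).erase 0
      = Finset.image Nat.succ ((range (N+1)).erase j) := by
    ext a
    simp only [Finset.mem_erase, Finset.mem_range, Finset.mem_image]
    constructor
    · rintro ⟨h1, h2, h3⟩
      exact ⟨a - 1, ⟨by omega, by omega⟩, by omega⟩
    · rintro ⟨b, ⟨hb1, hb2⟩, rfl⟩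
      exact ⟨by omega, by omega, by omega⟩
  have himg : ∏ j' ∈ ((range (N+2)).erase (j+1)).erase 0, ((x (j+1) : ℝ) - (x j' : ℝ))
      = ∏ i ∈ (range (N+1)).erase j, ((x (j+1) : ℝ) - (x (i+1) : ℝ)) := by
    rw [hset, Finset.prod_image (fun a _ b _ hab => Nat.succ_injective hab)]
  have ha : ((x (j+1) : ℝ) - (x 0 : ℝ)) ≠ 0 := by
    have := hx 0 (j+1) (by omega) (by omega)
    have : (x 0 : ℝ) < (x (j+1) : ℝ) := by exact_mod_cast this
    linarith
  unfold Wt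
  simp only [Function.comp_apply, Nat.succ_eq_add_one]
  rw [hsplit, himg, mul_inv]
  rw [mul_comm (((x (j+1) : ℝ) - (x 0 : ℝ))⁻¹) _, mul_assoc, inv_mul_cancel₀ ha, mul_one]

lemma Wt_top {N : ℕ} {x : ℕ → ℤ} (hx : ∀ i j, i < j → j < N+2 → x i < x j)
    {i : ℕ} (hi : i < N+1) :
    Wt (N+2) x i * ((x i : ℝ) - (x (N+1) : ℝ)) = Wt (N+1) x i := by
  have htopS : (N+1 : ℕ) ∈ (range (N+2)).erase i := by
    simp [Finset.mem_erase, Finset.mem_range]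
    omega
  have hsplit := (Finset.mul_prod_erase _ (fun j' => ((x i : ℝ) - (x j' : ℝ))) htopS).symm
  have hset : ((range (N+2)).erase i).erase (N+1) = (range (N+1)).erase i := by
    ext a
    simp only [Finset.mem_erase, Finset.mem_range]
    omega
  have ha : ((x i : ℝ) - (x (N+1) : ℝ)) ≠ 0 := by
    have := hx i (N+1) (by omega) (by omega)
    have : (x i : ℝ) < (x (N+1) : ℝ) := by exact_mod_cast this
    linarith
  unfold Wt
  rw [hsplit, hset, mul_inv]
  rw [mul_comm (((x i : ℝ) - (x (N+1) : ℝ))⁻¹) _, mul_assoc, inv_mul_cancel₀ ha, mul_one]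

lemma sumA {N : ℕ} {x : ℕ → ℤ} (hx : ∀ i j, i < j → j < N+2 → x i < x j) (f : ℤ → ℝ) :
    ∑ i ∈ range (N+2), Wt (N+2) x i * ((x i : ℝ) - (x 0 : ℝ)) * f (x i)
      = ∑ j ∈ range (N+1), Wt (N+1) (x ∘ Nat.succ) j * f (x (j+1)) := by
  rw [Finset.sum_range_succ']
  simp only [sub_self, mul_zero, zero_mul, add_zero]
  apply Finset.sum_congr rfl
  intro j hj
  rw [Finset.mem_range] at hj
  rw [Wt_shift hx hj]

lemma sumB {N : ℕ} {x : ℕ → ℤ} (hx : ∀ i j, i < j → j < N+2 → x i < x j) (f : ℤ → ℝ) :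
    ∑ i ∈ range (N+2), Wt (N+2) x i * ((x i : ℝ) - (x (N+1) : ℝ)) * f (x i)
      = ∑ i ∈ range (N+1), Wt (N+1) x i * f (x i) := by
  rw [Finset.sum_range_succ]
  simp only [sub_self, mul_zero, zero_mul, add_zero]
  apply Finset.sum_congr rfl
  intro i hi
  rw [Finset.mem_range] at hi
  rw [Wt_top hx hi]

lemma gam_rec (p : ℕ) (x : ℕ → ℤ) (hx : ∀ i j, i < j → j < p+3 → x i < x j) (k : ℤ) :
    ((p:ℝ)+1) * ((x (p+2) : ℝ) - (x 0 : ℝ)) * gam (p+1) x k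
      = ((x (p+2) : ℝ) - ((p:ℝ)+1) - (k:ℝ)) * gam p (x ∘ Nat.succ) k
        + ((k:ℝ) + ((p:ℝ)+1) - (x 0 : ℝ)) * gam p x k := by
  have hxA : ∀ i j, i < j → j < (p+1)+2 → x i < x j := fun i j h1 h2 => hx i j h1 (by omega)
  set A := ∑ j ∈ range (p+2), Wt (p+2) (x ∘ Nat.succ) j * phi p k (x (j+1)) with hA
  set B := ∑ i ∈ range (p+2), Wt (p+2) x i * phi p k (x i) with hB
  set S := ∑ i ∈ range (p+3), Wt (p+3) x i * phi p k (x i) with hSdef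
  set T2 := ∑ i ∈ range (p+3), Wt (p+3) x i * phi (p+1) k (x i) with hT2
  have hgam1 : gam (p+1) x k = (-1)^(p+2) * T2 := rfl
  have hgamA : gam p (x ∘ Nat.succ) k = (-1)^(p+1) * A := rfl
  have hgamB : gam p x k = (-1)^(p+1) * B := rfl
  have hT : ((p:ℝ)+1) * T2 = ((k:ℝ) + ((p:ℝ)+1) - (x 0 : ℝ)) * S - A := by
    have e1 : ((p:ℝ)+1) * T2
        = ∑ i ∈ range (p+3), Wt (p+3) x i * (((k:ℝ) + ((p:ℝ)+1) - (x i : ℝ)) * phi p k (x i)) := by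
      rw [hT2, Finset.mul_sum]
      apply Finset.sum_congr rfl
      intro i _
      rw [phi_succ_mul p k (x i)]
      have hp1 : ((p:ℝ)+1) ≠ 0 := by positivity
      push_cast
      field_simp
      try ring
    have e3 : ∑ i ∈ range (p+3), Wt (p+3) x i * ((x i : ℝ) - (x 0 : ℝ)) * phi p k (x i) = A := by
      have := sumA (N := p+1) (x := x) (fun i j h1 h2 => hx i j h1 (by omega)) (fun t => phi p k t)
      rw [hA]
      exact this
    have e2 : ∀ i ∈ range (p+3),
        Wt (p+3) x i * (((k:ℝ) + ((p:ℝ)+1) - (x i : ℝ)) * phi p k (x i))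
        = ((k:ℝ) + ((p:ℝ)+1) - (x 0 : ℝ)) * (Wt (p+3) x i * phi p k (x i))
          - Wt (p+3) x i * ((x i : ℝ) - (x 0 : ℝ)) * phi p k (x i) := by
      intro i _
      ring
    have e2' : ∑ i ∈ range (p+3), Wt (p+3) x i * (((k:ℝ) + ((p:ℝ)+1) - (x i : ℝ)) * phi p k (x i))
        = ∑ i ∈ range (p+3), (((k:ℝ) + ((p:ℝ)+1) - (x 0 : ℝ)) * (Wt (p+3) x i * phi p k (x i))
          - Wt (p+3) x i * ((x i : ℝ) - (x 0 : ℝ)) * phi p k (x i)) := Finset.sum_congr rfl e2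
    rw [e1, e2', Finset.sum_sub_distrib, ← Finset.mul_sum, ← hSdef, e3]
  have hS : ((x (p+2) : ℝ) - (x 0 : ℝ)) * S = A - B := by
    have e4 : ((x (p+2) : ℝ) - (x 0 : ℝ)) * S
        = (∑ i ∈ range (p+3), Wt (p+3) x i * ((x i : ℝ) - (x 0 : ℝ)) * phi p k (x i))
          - ∑ i ∈ range (p+3), Wt (p+3) x i * ((x i : ℝ) - (x (p+2) : ℝ)) * phi p k (x i) := by
      rw [hSdef, Finset.mul_sum, ← Finset.sum_sub_distrib]
      apply Finset.sum_congr rfl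
      intro i _
      ring
    rw [e4]
    have e5 := sumA (N := p+1) (x := x) (fun i j h1 h2 => hx i j h1 (by omega)) (fun t => phi p k t)
    have e6 := sumB (N := p+1) (x := x) (fun i j h1 h2 => hx i j h1 (by omega)) (fun t => phi p k t)
    rw [e5, e6, ← hA, ← hB]
  rw [hgam1, hgamA, hgamB]
  linear_combination ((-1:ℝ)^(p+2) * ((x (p+2) : ℝ) - (x 0 : ℝ))) * hT
    + ((-1:ℝ)^(p+2) * ((k:ℝ) + ((p:ℝ)+1) - (x 0 : ℝ))) * hS

lemma gam_nonneg : ∀ (p : ℕ) (x : ℕ → ℤ), (∀ i j, i < j → j < p+2 → x i < x j) → ∀ k, 0 ≤ gam p x k := by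
  intro p
  induction p with
  | zero =>
      intro x hx k
      have h01 : x 0 < x 1 := hx 0 1 (by omega) (by omega)
      have hd : (0:ℝ) < (x 1 : ℝ) - (x 0 : ℝ) := by
        have : (x 0 : ℝ) < (x 1 : ℝ) := by exact_mod_cast h01
        linarith
      have e : (range 2).erase 0 = ({1} : Finset ℕ) := by decide
      have e' : (range 2).erase 1 = ({0} : Finset ℕ) := by decide
      have hval : gam 0 x k
          = ((if x 0 ≤ k then (1:ℝ) else 0) - (if x 1 ≤ k then (1:ℝ) else 0))
            / ((x 1 : ℝ) - (x 0 : ℝ)) := by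
        rw [gam, Finset.sum_range_succ, Finset.sum_range_succ, Finset.sum_range_zero, zero_add]
        rw [Wt, Wt, e, e', Finset.prod_singleton, Finset.prod_singleton, phi_zero, phi_zero]
        have hne : (x 1 : ℝ) - (x 0 : ℝ) ≠ 0 := ne_of_gt hd
        have hne2 : (x 0 : ℝ) - (x 1 : ℝ) ≠ 0 := by intro hc; apply hne; linarith
        set I0 := (if x 0 ≤ k then (1:ℝ) else 0) with hI0
        set I1 := (if x 1 ≤ k then (1:ℝ) else 0) with hI1
        field_simp
        ring
      rw [hval]
      by_cases h0 : x 0 ≤ k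
      · by_cases h1 : x 1 ≤ k
        · rw [if_pos h0, if_pos h1]
          simp
        · rw [if_pos h0, if_neg h1]
          positivity
      · have h1 : ¬ (x 1 ≤ k) := by omega
        rw [if_neg h0, if_neg h1]
        simp
  | succ p ih =>
      intro x hx k
      by_cases hlo : k < x 0
      · rw [gam_lo (p := p+1) (fun i j h1 h2 => hx i j h1 h2) hlo]
      by_cases hhi : x (p+2) ≤ k + (p+1)
      · rw [gam_hi (p := p+1) (fun i j h1 h2 => hx i j h1 h2) hhi]
      push_neg at hlo hhi
      -- middle range: use recursion
      have hrec := gam_rec p x (fun i j h1 h2 => hx i j h1 h2) k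
      have hD : (0:ℝ) < (x (p+2) : ℝ) - (x 0 : ℝ) := by
        have := hx 0 (p+2) (by omega) (by omega)
        have : (x 0 : ℝ) < (x (p+2) : ℝ) := by exact_mod_cast this
        linarith
      have hc1 : (0:ℝ) ≤ (x (p+2) : ℝ) - ((p:ℝ)+1) - (k:ℝ) := by
        have : k + (p+1) < x (p+2) := hhi
        have : ((k + (p+1) : ℤ) : ℝ) < ((x (p+2) : ℤ) : ℝ) := by exact_mod_cast this
        push_cast at this
        linarith
      have hc2 : (0:ℝ) ≤ (k:ℝ) + ((p:ℝ)+1) - (x 0 : ℝ) := by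
        have : (x 0 : ℝ) ≤ (k : ℝ) := by exact_mod_cast hlo
        linarith
      have hA := ih (x ∘ Nat.succ) (fun i j h1 h2 => hx (i+1) (j+1) (by omega) (by omega)) k
      have hB := ih x (fun i j h1 h2 => hx i j h1 (by omega)) k
      have hRHS : (0:ℝ) ≤ ((x (p+2) : ℝ) - ((p:ℝ)+1) - (k:ℝ)) * gam p (x ∘ Nat.succ) k
          + ((k:ℝ) + ((p:ℝ)+1) - (x 0 : ℝ)) * gam p x k :=
        add_nonneg (mul_nonneg hc1 hA) (mul_nonneg hc2 hB)
      rw [← hrec] at hRHS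
      have hpos : (0:ℝ) < ((p:ℝ)+1) * ((x (p+2) : ℝ) - (x 0 : ℝ)) := by positivity
      by_contra hneg
      push_neg at hneg
      nlinarith [hRHS, hpos, mul_pos hpos (neg_pos.mpr hneg)]

lemma bdiff_eq_zero {w : ℤ → ℝ} (hfin : (Function.support w).Finite)
    (h : ∀ k, bdiff w k = 0) : ∀ k, w k = 0 := by
  have hconst : ∀ (k : ℤ) (j : ℕ), w k = w (k + j) := by
    intro k j
    induction j with
    | zero => simp
    | succ r ih =>
        have := h (k + r + 1)
        simp only [bdiff] at this
        have h2 : w (k + r + 1) = w (k + r + 1 - 1) := by linarith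
        rw [ih]
        push_cast
        rw [show (k + (r + 1) : ℤ) = k + r + 1 by ring, h2]
        norm_num
  by_contra hne
  push_neg at hne
  obtain ⟨k, hk⟩ := hne
  have hinf : (Function.support w).Infinite := by
    apply Set.infinite_of_injective_forall_mem (f := fun j : ℕ => k + j)
    · intro a b hab
      simp only at hab
      omega
    · intro j
      simp only [Function.mem_support]
      rw [← hconst k j]
      exact hk
  exact hinf hfin

lemma support_bdiff_finite {w : ℤ → ℝ} (hfin : (Function.support w).Finite) :
    (Function.support (bdiff w)).Finite := by
  apply Set.Finite.subset (hfin.union (hfin.image (fun t => t + 1)))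
  intro k hk
  simp only [Function.mem_support, bdiff] at hk
  by_cases h1 : w k = 0
  · right
    have h2 : w (k-1) ≠ 0 := by
      intro hc; apply hk; rw [h1, hc]; ring
    exact ⟨k - 1, h2, by ring⟩
  · left; exact h1

lemma bdiff_sub (u v : ℤ → ℝ) :
    bdiff (fun k => u k - v k) = fun k => bdiff u k - bdiff v k := by
  funext k; simp only [bdiff]; ring

lemma bdiff_iter_uniq : ∀ (r : ℕ) (u v : ℤ → ℝ), (Function.support u).Finite →
    (Function.support v).Finite → bdiff^[r] u = bdiff^[r] v → u = v := by
  intro r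
  induction r with
  | zero => intro u v _ _ h; simpa using h
  | succ s ih =>
      intro u v hu hv h
      rw [Function.iterate_succ_apply, Function.iterate_succ_apply] at h
      have hbd : bdiff u = bdiff v :=
        ih (bdiff u) (bdiff v) (support_bdiff_finite hu) (support_bdiff_finite hv) h
      have hzero : ∀ k, bdiff (fun k => u k - v k) k = 0 := by
        intro k
        rw [bdiff_sub]
        simp only
        rw [congrFun hbd k]
        ring
      have hsub : (Function.support (fun k => u k - v k)).Finite := by
        apply Set.Finite.subset (hu.union hv)
        intro k hk
        simp only [Function.mem_support] at hk
        by_contra hc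
        simp only [Set.mem_union, Function.mem_support, not_or, not_not] at hc
        apply hk
        rw [hc.1, hc.2]; ring
      have := bdiff_eq_zero hsub hzero
      funext k
      have hk := this k
      linarith

lemma iterate_bdiff_sum (r : ℕ) (s : Finset ℕ) (a : ℕ → ℝ) (F : ℕ → ℤ → ℝ) :
    bdiff^[r] (fun k => ∑ i ∈ s, a i * F i k)
      = fun k => ∑ i ∈ s, a i * (bdiff^[r] (F i)) k := by
  induction r generalizing F with
  | zero => rfl
  | succ q ih =>
      rw [Function.iterate_succ_apply]
      have e1 : bdiff (fun k => ∑ i ∈ s, a i * F i k)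
          = fun k => ∑ i ∈ s, a i * bdiff (F i) k := by
        funext k
        simp only [bdiff, ← Finset.sum_sub_distrib]
        apply Finset.sum_congr rfl
        intro i _
        ring
      rw [e1, ih (fun i => bdiff (F i))]
      funext k
      apply Finset.sum_congr rfl
      intro i _
      rw [← Function.iterate_succ_apply]

lemma telescope_sum (f : ℤ → ℝ) (a : ℤ) :
    ∀ (b : ℕ), ∑ k ∈ Finset.Icc a (a + (b:ℤ)), (f k - f (k-1)) = f (a + b) - f (a - 1) := by
  intro b
  induction b with
  | zero => simp
  | succ q ih =>
      have hins : Finset.Icc a (a + ((q:ℤ)+1)) = insert (a + (q:ℤ) + 1) (Finset.Icc a (a + (q:ℤ))) := by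
        ext z
        simp only [Finset.mem_Icc, Finset.mem_insert]
        omega
      push_cast
      rw [hins, Finset.sum_insert (by simp only [Finset.mem_Icc]; omega)]
      push_cast at ih
      rw [ih]
      have : a + (q:ℤ) + 1 - 1 = a + q := by ring
      rw [this]
      ring_nf

lemma fin_val_erase_prod {m : ℕ} (j : Fin m) (g : ℕ → ℝ) :
    ∏ i ∈ Finset.univ.erase j, g i.val = ∏ i ∈ (Finset.range m).erase j.val, g i := by
  have himg : (Finset.univ.erase j).image Fin.val = (Finset.range m).erase j.val := by
    ext a
    simp only [Finset.mem_image, Finset.mem_erase, Finset.mem_range, Finset.mem_univ, and_true]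
    constructor
    · rintro ⟨i, hi, rfl⟩
      exact ⟨fun hc => hi (Fin.val_injective hc), i.isLt⟩
    · rintro ⟨ha, hm⟩
      exact ⟨⟨a, hm⟩, fun hc => ha (by rw [← hc]), rfl⟩
  rw [← himg, Finset.prod_image (fun a _ b _ hab => Fin.val_injective hab)]
end

end Stmt0Aux

open Stmt0Aux in
/-- if `h` is the minimally supported filter with coefficients
`d j = ∏_{i≠j} n i / (n i - n j)` at positions `n j`, and `g` is a finitely
supported sequence with `Δ^m g = δ⁰ - h`, then `‖g‖₁ = (∏ n j) / m!`. -/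
theorem stmt0 (m : ℕ) (hm : 1 ≤ m) (n : Fin m → ℕ)
    (hmono : StrictMono n) (hn1 : 1 ≤ n ⟨0, hm⟩)
    (d : Fin m → ℝ)
    (hd : ∀ j, d j = ∏ i ∈ univ.erase j, (n i : ℝ) / ((n i : ℝ) - (n j : ℝ)))
    (h : ℤ → ℝ)
    (hh : ∀ k : ℤ, h k = ∑ j, d j * (if k = (n j : ℤ) then 1 else 0))
    (g : ℤ → ℝ) (hgfin : (Function.support g).Finite)
    (hg : bdiff^[m] g = fun k => kdelta 0 k - h k) :
    ∑ᶠ k : ℤ, |g k| = (∏ j, (n j : ℝ)) / (Nat.factorial m) := by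
  have hpos : ∀ j : Fin m, 1 ≤ n j := by
    intro j
    calc 1 ≤ n ⟨0, hm⟩ := hn1
      _ ≤ n j := hmono.monotone (by exact Fin.mk_le_mk.mpr (Nat.zero_le _))
  obtain ⟨p, rfl⟩ : ∃ p, m = p + 1 := ⟨m - 1, by omega⟩
  -- extended integer nodes
  obtain ⟨x, hx0, hxval⟩ : ∃ x : ℕ → ℤ, x 0 = 0 ∧
      ∀ (i : ℕ) (hi : i < p+1), x (i+1) = ((n ⟨i, hi⟩ : ℕ) : ℤ) := by
    refine ⟨fun i => if hcond : 1 ≤ i ∧ i ≤ p+1 then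
      ((n ⟨i-1, by omega⟩ : ℕ) : ℤ) else 0, by simp, ?_⟩
    intro i hi
    have hcond : 1 ≤ i + 1 ∧ i + 1 ≤ p + 1 := ⟨by omega, by omega⟩
    simp only [dif_pos hcond, Nat.add_sub_cancel]
  have hxmono : ∀ i j, i < j → j < p+2 → x i < x j := by
    intro i j hij hj
    obtain ⟨jj, rfl⟩ : ∃ jj, j = jj + 1 := ⟨j - 1, by omega⟩
    have hjj : jj < p + 1 := by omega
    rw [hxval jj hjj]
    rcases Nat.eq_zero_or_pos i with rfl | hposi
    · rw [hx0]
      have := hpos ⟨jj, hjj⟩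
      omega
    · obtain ⟨ii, rfl⟩ : ∃ ii, i = ii + 1 := ⟨i - 1, by omega⟩
      have hii : ii < p + 1 := by omega
      rw [hxval ii hii]
      have := hmono (show (⟨ii, hii⟩ : Fin (p+1)) < ⟨jj, hjj⟩ from by
        rw [Fin.mk_lt_mk]; omega)
      omega
  have hxnonneg : ∀ i, i < p+2 → 0 ≤ x i := by
    intro i hi
    rcases Nat.eq_zero_or_pos i with rfl | hposi
    · omega
    · have := hxmono 0 i hposi hi; omega
  set P : ℝ := ∏ j, (n j : ℝ) with hPdef
  have hPpos : 0 < P := by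
    apply Finset.prod_pos
    intro j _
    have := hpos j
    positivity
  set c : ℝ := (-1)^(p+1) * P with hcdef
  set G : ℤ → ℝ := fun k => ∑ i ∈ range (p+2), (c * Wt (p+2) x i) * phi p k (x i) with hGdef
  set H : ℤ → ℝ := fun k => ∑ i ∈ range (p+2), (c * Wt (p+2) x i) * phi (p+1) k (x i) with hHdef
  -- value facts
  have hFv : ∀ i : Fin (p+1), ((x (i.val+1) : ℤ) : ℝ) = (n i : ℝ) := by
    intro i
    rw [hxval i.val i.isLt]
    norm_num
  have hP : P = ∏ i ∈ range (p+1), ((x (i+1) : ℤ) : ℝ) := by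
    rw [hPdef, ← Fin.prod_univ_eq_prod_range (fun i => ((x (i+1) : ℤ) : ℝ)) (p+1)]
    apply Finset.prod_congr rfl
    intro i _
    rw [hFv i]
  -- weight identities
  have hW0 : c * Wt (p+2) x 0 = 1 := by
    have hset0 : (range (p+2)).erase 0 = Finset.image Nat.succ (range (p+1)) := by
      ext a
      simp only [Finset.mem_erase, Finset.mem_range, Finset.mem_image]
      constructor
      · rintro ⟨h1, h2⟩; exact ⟨a - 1, by omega, by omega⟩
      · rintro ⟨b, hb, rfl⟩; omega
    have hprod : ∏ j ∈ (range (p+2)).erase 0, ((x 0 : ℝ) - (x j : ℝ))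
        = (-1)^(p+1) * P := by
      rw [hset0, Finset.prod_image (fun a _ b _ hab => Nat.succ_injective hab)]
      have e1 : ∀ i ∈ range (p+1), ((x 0 : ℝ) - (x (i+1) : ℝ))
          = (-1) * ((x (i+1) : ℤ) : ℝ) := by
        intro i _
        rw [hx0]
        push_cast
        ring
      rw [Finset.prod_congr rfl e1, Finset.prod_mul_distrib, Finset.prod_const,
        Finset.card_range, ← hP]
    rw [Wt, hprod, hcdef]
    have hne : ((-1:ℝ))^(p+1) * P ≠ 0 := by
      apply mul_ne_zero
      · exact pow_ne_zero _ (by norm_num)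
      · exact ne_of_gt hPpos
    field_simp
  have hWj : ∀ j : Fin (p+1), c * Wt (p+2) x (j.val+1) = - d j := by
    intro j
    have hj1 : j.val + 1 < p + 2 := by omega
    -- split off index 0 from the erase-product
    have h0S : (0:ℕ) ∈ (range (p+2)).erase (j.val+1) := by
      simp [Finset.mem_erase, Finset.mem_range]
    have hsplit := (Finset.mul_prod_erase _
      (fun jj => ((x (j.val+1) : ℝ) - (x jj : ℝ))) h0S).symm
    have hset : ((range (p+2)).erase (j.val+1)).erase 0
        = Finset.image Nat.succ ((range (p+1)).erase j.val) := by
      ext a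
      simp only [Finset.mem_erase, Finset.mem_range, Finset.mem_image]
      constructor
      · rintro ⟨h1, h2, h3⟩; exact ⟨a - 1, ⟨by omega, by omega⟩, by omega⟩
      · rintro ⟨b, ⟨hb1, hb2⟩, rfl⟩; exact ⟨by omega, by omega, by omega⟩
    set Qj : ℝ := ∏ i ∈ (range (p+1)).erase j.val,
      ((x (j.val+1) : ℝ) - (x (i+1) : ℝ)) with hQjdef
    have hWt : Wt (p+2) x (j.val+1) = (((x (j.val+1) : ℝ) - (x 0 : ℝ)) * Qj)⁻¹ := by
      rw [Wt, hsplit, hset, Finset.prod_image (fun a _ b _ hab => Nat.succ_injective hab)]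
    -- Fin-product forms
    set Aj : ℝ := ∏ i ∈ Finset.univ.erase j, (n i : ℝ) with hAjdef
    set Bj : ℝ := ∏ i ∈ Finset.univ.erase j, ((n i : ℝ) - (n j : ℝ)) with hBjdef
    have hQB : Qj = (-1)^p * Bj := by
      rw [hQjdef, hBjdef]
      rw [← fin_val_erase_prod j (fun i => ((x (j.val+1) : ℝ) - (x (i+1) : ℝ)))]
      have e1 : ∀ i ∈ Finset.univ.erase j,
          ((x (j.val+1) : ℝ) - (x (i.val+1) : ℝ)) = (-1) * ((n i : ℝ) - (n j : ℝ)) := by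
        intro i _
        rw [hFv i, hFv j]
        ring
      rw [Finset.prod_congr rfl e1, Finset.prod_mul_distrib, Finset.prod_const]
      have hcard : (Finset.univ.erase j).card = p := by
        rw [Finset.card_erase_of_mem (Finset.mem_univ j), Finset.card_univ,
          Fintype.card_fin]
        omega
      rw [hcard]
    have hAP : Aj * (n j : ℝ) = P := by
      rw [hAjdef, hPdef]
      exact Finset.prod_erase_mul _ _ (Finset.mem_univ j)
    have hdj : d j = Aj / Bj := by
      rw [hd j, hAjdef, hBjdef, Finset.prod_div_distrib]
    have hnj : ((n j : ℕ) : ℝ) ≠ 0 := by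
      have := hpos j
      positivity
    have hBne : Bj ≠ 0 := by
      rw [hBjdef]
      apply Finset.prod_ne_zero_iff.mpr
      intro i hi
      have hne : n i ≠ n j := fun hc =>
        (Finset.mem_erase.mp hi).1 (hmono.injective hc)
      intro hc
      apply hne
      have : ((n i : ℕ) : ℝ) = ((n j : ℕ) : ℝ) := by linarith
      exact_mod_cast this
    have hx1 : ((x (j.val+1) : ℤ) : ℝ) = (n j : ℝ) := hFv j
    rw [hWt, hx1, hx0, hdj, hQB, hcdef, ← hAP]
    push_cast
    have hm1 : ((-1:ℝ))^p ≠ 0 := pow_ne_zero _ (by norm_num)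
    field_simp
    ring
  -- the m-fold difference of G is the target filter
  have hdelta : bdiff^[p+1] G = fun k => kdelta 0 k - h k := by
    rw [hGdef, iterate_bdiff_sum (p+1) (range (p+2))
      (fun i => c * Wt (p+2) x i) (fun i k => phi p k (x i))]
    funext k
    have hrw : ∀ i ∈ range (p+2),
        (c * Wt (p+2) x i) * (bdiff^[p+1] (fun k => phi p k (x i))) k
        = (c * Wt (p+2) x i) * (if k = x i then 1 else 0) := by
      intro i _
      rw [phi_iter_delta p (x i)]
    rw [Finset.sum_congr rfl hrw, Finset.sum_range_succ']
    have hterm0 : (c * Wt (p+2) x 0) * (if k = x 0 then 1 else 0) = kdelta 0 k := by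
      rw [hW0, hx0, one_mul, kdelta]
    rw [hterm0, hh k]
    have hsum : (∑ j : Fin (p+1), d j * (if k = ((n j : ℕ) : ℤ) then 1 else 0))
        = - ∑ i ∈ range (p+1),
            (c * Wt (p+2) x (i+1)) * (if k = x (i+1) then 1 else 0) := by
      rw [← Finset.sum_neg_distrib]
      rw [← Fin.sum_univ_eq_sum_range
        (fun i => -((c * Wt (p+2) x (i+1)) * (if k = x (i+1) then 1 else 0))) (p+1)]
      apply Finset.sum_congr rfl
      intro j _
      have hx1 : x (j.val+1) = ((n j : ℕ) : ℤ) := by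
        rw [hxval j.val j.isLt]
      rw [hx1, hWj j]
      ring
    linear_combination hsum
  -- relation with gam, nonnegativity
  have hGgam : ∀ k, G k = P * gam p x k := by
    intro k
    have e1 : G k = c * ∑ i ∈ range (p+2), Wt (p+2) x i * phi p k (x i) := by
      rw [hGdef, Finset.mul_sum]
      apply Finset.sum_congr rfl
      intro i _
      ring
    rw [e1, gam, hcdef]
    ring
  have hGnonneg : ∀ k, 0 ≤ G k := by
    intro k
    rw [hGgam k]
    exact mul_nonneg hPpos.le (gam_nonneg p x hxmono k)
  -- support bound
  set b : ℤ := max 0 (x (p+1) - (p+1)) with hbdef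
  have hGzero : ∀ k, k < 0 ∨ b < k → G k = 0 := by
    intro k hk
    rw [hGgam k]
    rcases hk with hk | hk
    · rw [gam_lo hxmono (by omega : k < x 0), mul_zero]
    · have : x (p+1) ≤ k + p := by
        have h1 : x (p+1) - (p+1) ≤ b := le_max_right _ _
        omega
      rw [gam_hi hxmono this, mul_zero]
  have hGsupp : Function.support G ⊆ ↑(Finset.Icc (0:ℤ) b) := by
    intro k hk
    simp only [Function.mem_support] at hk
    simp only [Finset.coe_Icc, Set.mem_Icc]
    by_contra hc
    push_neg at hc
    apply hk
    apply hGzero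
    by_cases h0 : 0 ≤ k
    · right; exact hc h0
    · left; omega
  have hGfin : (Function.support G).Finite :=
    Set.Finite.subset (Finset.Icc (0:ℤ) b).finite_toSet hGsupp
  -- uniqueness
  have hgG : g = G := bdiff_iter_uniq (p+1) g G hgfin hGfin (hg.trans hdelta.symm)
  -- telescoping with H
  have hGH : ∀ k, G k = H k - H (k-1) := by
    intro k
    rw [hGdef, hHdef]
    simp only
    rw [← Finset.sum_sub_distrib]
    apply Finset.sum_congr rfl
    intro i _
    rw [← phi_sub_phi p k (x i)]
    ring
  have hHlo : H (-1) = 0 := by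
    rw [hHdef]
    apply Finset.sum_eq_zero
    intro i hi
    rw [Finset.mem_range] at hi
    have : ¬ (x i ≤ -1) := by have := hxnonneg i hi; omega
    rw [phi, if_neg this, mul_zero]
  have hHhi : ∀ k, x (p+1) ≤ k + (p+1) → H k = P / ((p+1).factorial : ℝ) := by
    intro k hk
    have e1 : H k = c * ∑ i ∈ range (p+2), Wt (p+2) x i * phi (p+1) k (x i) := by
      rw [hHdef, Finset.mul_sum]
      apply Finset.sum_congr rfl
      intro i _
      ring
    have e2 := lagr_phi (N := p+1) (p := p+1) x hxmono k
      (fun i hi => by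
        rcases Nat.lt_or_ge i (p+1) with h1 | h1
        · have := hxmono i (p+1) h1 (by omega); omega
        · have : i = p+1 := by omega
          rw [this]; exact hk)
      (le_refl _)
    rw [if_pos rfl] at e2
    rw [e1, e2, hcdef]
    have hsq : ((-1:ℝ))^(p+1) * (-1:ℝ)^(p+1) = 1 := by
      rw [← pow_add]
      exact Even.neg_one_pow ⟨p+1, by ring⟩
    have hfne : (((p+1).factorial : ℕ) : ℝ) ≠ 0 := by positivity
    field_simp
    linear_combination hsq
  -- final computation
  have habs : ∀ k : ℤ, |g k| = g k := by
    intro k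
    rw [hgG]
    exact abs_of_nonneg (hGnonneg k)
  have hgsupp : Function.support g ⊆ ↑(Finset.Icc (0:ℤ) b) := by
    rw [hgG]; exact hGsupp
  rw [finsum_congr habs, finsum_eq_sum_of_support_subset g hgsupp]
  have hb0 : (0:ℤ) ≤ b := le_max_left _ _
  obtain ⟨bn, hbn⟩ : ∃ bn : ℕ, b = 0 + (bn : ℤ) := ⟨b.toNat, by omega⟩
  have htel := telescope_sum H 0 bn
  have hsum2 : ∑ k ∈ Finset.Icc (0:ℤ) b, g k
      = ∑ k ∈ Finset.Icc (0:ℤ) (0 + (bn:ℤ)), (H k - H (k-1)) := by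
    rw [← hbn]
    apply Finset.sum_congr rfl
    intro k _
    rw [hgG, hGH k]
  rw [hsum2, htel]
  have hHb : H (0 + (bn:ℤ)) = P / ((p+1).factorial : ℝ) := by
    apply hHhi
    have h1 : x (p+1) - (p+1) ≤ b := le_max_right _ _
    omega
  rw [show (0:ℤ) - 1 = -1 by ring, hHlo, hHb, hPdef]
  ring
end

section
/- Let m ≥ 2 and let x_0 = 1 < x_1 < ... < x_{m-1} be real numbers. Define F as a function of the ratios r_j = x_j/x_{j-1} (j = 1, ..., m-1) by F(r) = ∑_{j=0}^{m-1} ∏_{i≠j} x_i/|x_i - x_j|. Then F(r) = ∑_{j=0}^{m-1} [∏_{i<j} 1/(r_{i+1}···r_j − 1)] · [∏_{i>j} 1/(1 − 1/(r_{j+1}···r_i))], and F is strictly decreasing in each variable r_j > 1. -/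
open Finset

/-- The constraint functional `f(x) = ∑_{j<m} ∏_{i≠j} x i / |x i - x j|`. -/
noncomputable def constraintF (m : ℕ) (x : ℕ → ℝ) : ℝ :=
  ∑ j ∈ range m, ∏ i ∈ (range m).erase j, x i / |x i - x j|

/-- `F` expressed in terms of the ratios `r`. -/
noncomputable def ratioF (m : ℕ) (r : ℕ → ℝ) : ℝ :=
  ∑ j ∈ range m,
    (∏ i ∈ range j, 1 / ((∏ k ∈ Icc (i + 1) j, r k) - 1)) *
    (∏ i ∈ Ioc j (m - 1), 1 / (1 - 1 / (∏ k ∈ Icc (j + 1) i, r k)))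

/-- `f(x) = F(r)` where `r j = x j / x (j-1)`, and `F` is strictly
decreasing in each variable `r j > 1`. -/
theorem stmt1 (m : ℕ) (hm : 2 ≤ m) :
    (∀ x : ℕ → ℝ, x 0 = 1 → (∀ i j, i < j → j ≤ m - 1 → x i < x j) →
      ∀ r : ℕ → ℝ, (∀ j, 1 ≤ j → j ≤ m - 1 → r j = x j / x (j - 1)) →
      constraintF m x = ratioF m r) ∧
    (∀ r r' : ℕ → ℝ, (∀ j, 1 ≤ j → j ≤ m - 1 → 1 < r j) →
      (∀ j, 1 ≤ j → j ≤ m - 1 → 1 < r' j) →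
      ∀ j₀, 1 ≤ j₀ → j₀ ≤ m - 1 →
      (∀ j, 1 ≤ j → j ≤ m - 1 → j ≠ j₀ → r' j = r j) →
      r j₀ < r' j₀ →
      ratioF m r' < ratioF m r) := by
  simp only [constraintF, ratioF]
  constructor
  · -- Part 1: f(x) = F(r)
    intro x hx0 hmono r hr
    have hxpos : ∀ i, i ≤ m - 1 → 0 < x i := by
      intro i hi
      rcases Nat.eq_zero_or_pos i with h | h
      · rw [h, hx0]; norm_num
      · have := hmono 0 i h hi; rw [hx0] at this; linarith
    have hprod : ∀ i j : ℕ, i ≤ j → j ≤ m - 1 →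
        (∏ k ∈ Icc (i + 1) j, r k) = x j / x i := by
      intro i j hij hjm
      induction j, hij using Nat.le_induction with
      | base =>
        rw [Finset.Icc_eq_empty (by omega), Finset.prod_empty,
          div_self (hxpos i hjm).ne']
      | succ j hij ih =>
        have hjm' : j ≤ m - 1 := by omega
        rw [Finset.prod_Icc_succ_top (by omega), ih hjm',
          hr (j + 1) (by omega) hjm, Nat.add_sub_cancel]
        have h1 : x i ≠ 0 := (hxpos i (by omega)).ne'
        have h2 : x j ≠ 0 := (hxpos j hjm').ne'
        field_simp
    apply Finset.sum_congr rfl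
    intro j hj
    rw [mem_range] at hj
    have hjm : j ≤ m - 1 := by omega
    have hsplit : (range m).erase j = range j ∪ Ioc j (m - 1) := by
      ext i
      simp only [mem_erase, mem_range, mem_union, mem_Ioc]
      omega
    have hdisj : Disjoint (range j) (Ioc j (m - 1)) := by
      rw [Finset.disjoint_left]
      intro i hi hi'
      rw [mem_range] at hi
      rw [mem_Ioc] at hi'
      omega
    rw [hsplit, Finset.prod_union hdisj]
    congr 1
    · apply Finset.prod_congr rfl
      intro i hi
      rw [mem_range] at hi
      have hlt : x i < x j := hmono i j hi hjm
      have hxi : (0:ℝ) < x i := hxpos i (by omega)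
      rw [hprod i j hi.le hjm, div_sub_one hxi.ne', one_div_div,
        abs_sub_comm, abs_of_pos (by linarith)]
    · apply Finset.prod_congr rfl
      intro i hi
      rw [mem_Ioc] at hi
      have hlt : x j < x i := hmono j i hi.1 hi.2
      have hxi : (0:ℝ) < x i := hxpos i hi.2
      rw [hprod j i hi.1.le hi.2, one_div_div, one_sub_div hxi.ne',
        one_div_div, abs_of_pos (by linarith)]
  · -- Part 2: strict monotonicity
    intro r r' hr hr' j₀ hj₀1 hj₀m hagree hlt
    have hle : ∀ k, 1 ≤ k → k ≤ m - 1 → r k ≤ r' k := by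
      intro k h1 h2
      by_cases hk : k = j₀
      · subst hk; exact hlt.le
      · rw [hagree k h1 h2 hk]
    -- products over Icc are > 1 when nonempty, and compare
    have hPgt : ∀ (s : ℕ → ℝ), (∀ k, 1 ≤ k → k ≤ m - 1 → 1 < s k) →
        ∀ a b : ℕ, a < b → b ≤ m - 1 → 1 < ∏ k ∈ Icc (a + 1) b, s k := by
      intro s hs a b hab hbm
      have : (1:ℝ) = ∏ k ∈ Icc (a + 1) b, (1:ℝ) := by simp
      rw [this]
      apply Finset.prod_lt_prod
      · intro k hk; norm_num
      · intro k hk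
        rw [mem_Icc] at hk
        exact (hs k (by omega) (by omega)).le
      · exact ⟨b, by rw [mem_Icc]; omega, by
          simpa using hs b (by omega) hbm⟩
    have hPle : ∀ a b : ℕ, b ≤ m - 1 →
        (∏ k ∈ Icc (a + 1) b, r k) ≤ ∏ k ∈ Icc (a + 1) b, r' k := by
      intro a b hbm
      apply Finset.prod_le_prod
      · intro k hk
        rw [mem_Icc] at hk
        linarith [hr k (by omega) (by omega)]
      · intro k hk
        rw [mem_Icc] at hk
        exact hle k (by omega) (by omega)
    have hPlt : ∀ a b : ℕ, a < j₀ → j₀ ≤ b → b ≤ m - 1 →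
        (∏ k ∈ Icc (a + 1) b, r k) < ∏ k ∈ Icc (a + 1) b, r' k := by
      intro a b h1 h2 hbm
      apply Finset.prod_lt_prod
      · intro k hk
        rw [mem_Icc] at hk
        linarith [hr k (by omega) (by omega)]
      · intro k hk
        rw [mem_Icc] at hk
        exact hle k (by omega) (by omega)
      · exact ⟨j₀, by rw [mem_Icc]; omega, hlt⟩
    -- left factors
    have hLpos : ∀ (s : ℕ → ℝ), (∀ k, 1 ≤ k → k ≤ m - 1 → 1 < s k) →
        ∀ j, j ≤ m - 1 → ∀ i ∈ range j,
        0 < 1 / ((∏ k ∈ Icc (i + 1) j, s k) - 1) := by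
      intro s hs j hjm i hi
      rw [mem_range] at hi
      have := hPgt s hs i j hi hjm
      exact one_div_pos.mpr (by linarith)
    have hRpos : ∀ (s : ℕ → ℝ), (∀ k, 1 ≤ k → k ≤ m - 1 → 1 < s k) →
        ∀ j, ∀ i ∈ Ioc j (m - 1),
        0 < 1 / (1 - 1 / (∏ k ∈ Icc (j + 1) i, s k)) := by
      intro s hs j i hi
      rw [mem_Ioc] at hi
      have h1 := hPgt s hs j i hi.1 hi.2
      have : 1 / (∏ k ∈ Icc (j + 1) i, s k) < 1 := by
        rw [div_lt_one (by linarith)]; linarith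
      exact one_div_pos.mpr (by linarith)
    -- per-term comparisons
    have hLle : ∀ j, j ≤ m - 1 → ∀ i ∈ range j,
        1 / ((∏ k ∈ Icc (i + 1) j, r' k) - 1) ≤
        1 / ((∏ k ∈ Icc (i + 1) j, r k) - 1) := by
      intro j hjm i hi
      rw [mem_range] at hi
      have h1 := hPgt r hr i j hi hjm
      have h2 := hPle i j hjm
      exact one_div_le_one_div_of_le (by linarith) (by linarith)
    have hRle : ∀ j, ∀ i ∈ Ioc j (m - 1),
        1 / (1 - 1 / (∏ k ∈ Icc (j + 1) i, r' k)) ≤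
        1 / (1 - 1 / (∏ k ∈ Icc (j + 1) i, r k)) := by
      intro j i hi
      rw [mem_Ioc] at hi
      have h1 := hPgt r hr j i hi.1 hi.2
      have h2 := hPle j i hi.2
      have h3 : 1 / (∏ k ∈ Icc (j + 1) i, r k) < 1 := by
        rw [div_lt_one (by linarith)]; linarith
      have h4 : 1 / (∏ k ∈ Icc (j + 1) i, r' k) ≤
          1 / (∏ k ∈ Icc (j + 1) i, r k) :=
        one_div_le_one_div_of_le (by linarith) h2
      exact one_div_le_one_div_of_le (by linarith) (by linarith)
    apply Finset.sum_lt_sum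
    · intro j hj
      rw [mem_range] at hj
      have hjm : j ≤ m - 1 := by omega
      apply mul_le_mul
      · exact Finset.prod_le_prod
          (fun i hi => (hLpos r' hr' j hjm i hi).le) (hLle j hjm)
      · exact Finset.prod_le_prod
          (fun i hi => (hRpos r' hr' j i hi).le) (hRle j)
      · exact Finset.prod_nonneg (fun i hi => (hRpos r' hr' j i hi).le)
      · exact Finset.prod_nonneg (fun i hi => (hLpos r hr j hjm i hi).le)
    · refine ⟨j₀, by rw [mem_range]; omega, ?_⟩
      apply mul_lt_mul
      · apply Finset.prod_lt_prod
        · exact fun i hi => hLpos r' hr' j₀ hj₀m i hi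
        · exact hLle j₀ hj₀m
        · refine ⟨0, by rw [mem_range]; omega, ?_⟩
          have h1 := hPgt r hr 0 j₀ hj₀1 hj₀m
          have h2 := hPlt 0 j₀ hj₀1 le_rfl hj₀m
          exact one_div_lt_one_div_of_lt (by linarith) (by linarith)
      · exact Finset.prod_le_prod
          (fun i hi => (hRpos r' hr' j₀ i hi).le) (hRle j₀)
      · exact Finset.prod_pos (fun i hi => hRpos r' hr' j₀ i hi)
      · exact (Finset.prod_pos (fun i hi => hLpos r hr j₀ hj₀m i hi)).le
end

section
/- Let m ≥ 2, γ > 1, and let z_j = cos((m−j)π/m), j = 1,...,m−1, be the zeros of the Chebyshev polynomial of the second kind U_{m−1}. Let β > 0 be the unique positive solution of cosh((2m−1)β)/cosh(β) = γ, and set K = 1/(2 sinh²β) and x_j = 1 + K(1 + z_j), x_0 = 1. Then f(x) := ∑_{j=0}^{m−1} ∏_{i≠j} x_i/|x_i − x_j| = γ. -/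
open Finset Real

open Polynomial Polynomial.Chebyshev Finset Real

lemma auxU_natDegree : ∀ n : ℕ, (U ℝ (n : ℤ)).natDegree ≤ n
  | 0 => by simp [U_zero]
  | 1 => by
      rw [Nat.cast_one, U_one]
      refine (natDegree_mul_le).trans ?_
      simp [natDegree_X_le]
  | (n+2) => by
      push_cast
      rw [U_add_two]
      refine (natDegree_sub_le _ _).trans (max_le ?_ ?_)
      · refine (natDegree_mul_le).trans ?_
        have h1 := auxU_natDegree (n+1)
        push_cast at h1
        have h2 : ((2 : ℝ[X]) * X).natDegree ≤ 1 :=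
          natDegree_mul_le.trans (by simp [natDegree_X_le])
        omega
      · have h2 := auxU_natDegree n
        push_cast at h2
        omega

lemma auxU_eval_neg : ∀ (n : ℕ) (x : ℝ), (U ℝ (n : ℤ)).eval (-x) = (-1)^n * (U ℝ (n:ℤ)).eval x
  | 0, x => by simp [U_zero]
  | 1, x => by rw [Nat.cast_one, U_one]; simp
  | (n+2), x => by
      have h1 := auxU_eval_neg (n+1) x
      have h2 := auxU_eval_neg n x
      push_cast at h1 h2 ⊢
      rw [U_add_two]
      simp only [eval_sub, eval_mul, eval_ofNat, eval_X, h1, h2]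
      ring

lemma auxU_eval_one : ∀ (n : ℕ), (U ℝ (n : ℤ)).eval 1 = n + 1
  | 0 => by simp [U_zero]
  | 1 => by rw [Nat.cast_one, U_one]; simp; norm_num
  | (n+2) => by
      have h1 := auxU_eval_one (n+1)
      have h2 := auxU_eval_one n
      push_cast at h1 h2 ⊢
      rw [U_add_two]
      simp only [eval_sub, eval_mul, eval_ofNat, eval_X, h1, h2]
      ring

lemma auxU_cosh (n : ℤ) (t : ℝ) :
    (U ℝ n).eval (Real.cosh t) * Real.sinh t = Real.sinh ((n + 1) * t) := by
  have h := Polynomial.Chebyshev.U_complex_cos (t * Complex.I) n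
  rw [Complex.cos_mul_I, Complex.sin_mul_I] at h
  rw [show ((n:ℂ)+1) * (t * Complex.I) = ((((n:ℤ)+1:ℤ):ℝ) * t : ℝ) * Complex.I by push_cast; ring,
    Complex.sin_mul_I] at h
  have h3 : (U ℂ n).eval (Complex.cosh t) * Complex.sinh t
      = Complex.sinh (((((n:ℤ)+1:ℤ):ℝ) * t : ℝ) : ℂ) := by
    have := h
    rw [← mul_assoc] at this
    exact mul_right_cancel₀ Complex.I_ne_zero this
  rw [← Complex.ofReal_cosh, ← Complex.ofReal_sinh, ← complex_ofReal_eval_U,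
    ← Complex.ofReal_sinh, ← Complex.ofReal_mul] at h3
  have h5 : ((n:ℝ)+1) * t = ((((n:ℤ)+1:ℤ):ℝ) * t) := by push_cast; ring
  rw [h5]
  exact_mod_cast h3


/-- with `z j = cos((m-j)π/m)` the zeros of `U_{m-1}`, `β > 0` the
solution of `cosh((2m-1)β)/cosh β = γ`, `K = 1/(2 sinh² β)` and
`x j = 1 + K (1 + z j)` (so `x 0 = 1`), one has
`f(x) = ∑_{j<m} ∏_{i≠j} x i / |x i - x j| = γ`. -/
theorem stmt5 (m : ℕ) (hm : 2 ≤ m) (γ : ℝ) (hγ : 1 < γ)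
    (β : ℝ) (hβ : 0 < β)
    (hβγ : Real.cosh ((2 * m - 1) * β) / Real.cosh β = γ)
    (K : ℝ) (hK : K = 1 / (2 * Real.sinh β ^ 2))
    (z : ℕ → ℝ) (hz : ∀ j, z j = Real.cos (((m : ℝ) - j) * π / m))
    (x : ℕ → ℝ) (hx : ∀ j, x j = 1 + K * (1 + z j)) :
    ∑ j ∈ range m, ∏ i ∈ (range m).erase j, x i / |x i - x j| = γ := by
  classical
  have hm0 : 0 < m := by omega
  have hmR : (0:ℝ) < m := by exact_mod_cast hm0
  set s : ℝ := Real.sinh β ^ 2 with hs_def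
  have hsinhβ : 0 < Real.sinh β := Real.sinh_pos_iff.mpr hβ
  have hs : 0 < s := by positivity
  set c : ℕ → ℝ := fun j => (1 + Real.cos (((m:ℝ) - j) * π / m)) / 2 with hc_def
  have hxc : ∀ j, x j = (s + c j) / s := by
    intro j
    rw [hx, hz, hK, hc_def]
    field_simp
  have hxsub : ∀ i j, x i - x j = (c i - c j) / s := by
    intro i j
    rw [hxc, hxc]
    rw [div_sub_div_same]
    ring_nf
  have hmono : ∀ i j : ℕ, i < j → j < m → c i < c j := by
    intro i j hij hjm
    have hiR : (i:ℝ) < j := by exact_mod_cast hij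
    have hjR : (j:ℝ) < m := by exact_mod_cast hjm
    have hπ := Real.pi_pos
    have hcos : Real.cos (((m:ℝ) - i) * π / m) < Real.cos (((m:ℝ) - j) * π / m) := by
      have h1 : ((m:ℝ) - j) * π / m ∈ Set.Icc 0 π := by
        constructor
        · have h0 : (0:ℝ) ≤ (m:ℝ) - j := by linarith
          positivity
        · rw [div_le_iff₀ hmR]; nlinarith
      have h2 : ((m:ℝ) - i) * π / m ∈ Set.Icc 0 π := by
        constructor
        · have h0 : (0:ℝ) ≤ (m:ℝ) - i := by linarith
          positivity
        · rw [div_le_iff₀ hmR]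
          have h0i : (0:ℝ) ≤ i := Nat.cast_nonneg i
          nlinarith
      have hlt : ((m:ℝ) - j) * π / m < ((m:ℝ) - i) * π / m := by
        exact div_lt_div_of_pos_right (by nlinarith) hmR
      exact Real.strictAntiOn_cos h1 h2 hlt
    simp only [hc_def]
    linarith
  have hinj : Set.InjOn c ↑(range m) := by
    intro a ha b hb hab
    simp only [coe_range, Set.mem_Iio] at ha hb
    rcases lt_trichotomy a b with h|h|h
    · exact absurd hab (ne_of_lt (hmono a b h hb))
    · exact h
    · exact absurd hab.symm (ne_of_lt (hmono b a h ha))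
  have e1 : ((m - 1 : ℕ) : ℤ) = (m:ℤ) - 1 := by omega
  have e2 : ((m - 2 : ℕ) : ℤ) = (m:ℤ) - 2 := by omega
  set q : ℝ[X] := U ℝ ((m:ℤ)-1) + U ℝ ((m:ℤ)-2) with hq_def
  set p : ℝ[X] := q.comp (Polynomial.C 2 * Polynomial.X - 1) with hp_def
  have hqdeg : q.natDegree ≤ m - 1 := by
    refine (natDegree_add_le _ _).trans (max_le ?_ ?_)
    · rw [← e1]; exact auxU_natDegree (m-1)
    · rw [← e2]; exact (auxU_natDegree (m-2)).trans (by omega)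
  have hpdeg : p.degree < ((range m).card : WithBot ℕ) := by
    rw [card_range]
    refine lt_of_le_of_lt degree_le_natDegree ?_
    have h1 : p.natDegree ≤ q.natDegree * (Polynomial.C (2:ℝ) * Polynomial.X - 1).natDegree :=
      natDegree_comp_le
    have h2 : (Polynomial.C (2:ℝ) * Polynomial.X - 1).natDegree ≤ 1 := by
      refine (natDegree_sub_le _ _).trans (max_le ?_ ?_)
      · exact (natDegree_C_mul_le _ _).trans natDegree_X_le
      · simp
    have h3 := Nat.mul_le_mul hqdeg h2
    have h4 : p.natDegree < m := by omega
    exact_mod_cast h4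
  have hpc : ∀ j, p.eval (c j) = q.eval (Real.cos (((m:ℝ) - j) * π / m)) := by
    intro j
    rw [hp_def, eval_comp]
    congr 1
    simp only [eval_sub, eval_mul, eval_C, eval_X, eval_one, hc_def]
    ring
  have hpval : ∀ j, j < m → p.eval (c j) = (-1:ℝ)^(m-1-j) := by
    intro j hj
    rcases Nat.eq_zero_or_pos j with rfl | hj1
    · have ha : ((m:ℝ) - (0:ℕ)) * π / m = π := by
        push_cast
        field_simp
        ring
      rw [hpc, ha, Real.cos_pi]
      have c1 : ((m-1:ℕ):ℝ) = (m:ℝ) - 1 := by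
        rw [Nat.cast_sub (by omega : 1 ≤ m)]; norm_num
      have c2 : ((m-2:ℕ):ℝ) = (m:ℝ) - 2 := by
        rw [Nat.cast_sub hm]; norm_num
      have hsign : (-1:ℝ)^(m-2) = -(-1:ℝ)^(m-1) := by
        rw [show m - 1 = (m-2)+1 by omega, pow_succ]; ring
      rw [hq_def, eval_add, show (-1:ℝ) = -(1:ℝ) by norm_num, ← e1, ← e2,
        auxU_eval_neg, auxU_eval_neg, auxU_eval_one, auxU_eval_one, hsign, c1, c2,
        Nat.sub_zero]
      ring
    · set θ : ℝ := ((m:ℝ) - j) * π / m with hθ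
      have hjm : (j:ℝ) < m := by exact_mod_cast hj
      have hπ := Real.pi_pos
      set k : ℕ := m - j with hk
      have hθk : θ = (k:ℝ) * π / m := by
        rw [hθ, hk, Nat.cast_sub (le_of_lt hj)]
      have hθpos : 0 < θ := by
        rw [hθk]
        have : (0:ℝ) < k := by
          have : 0 < k := by omega
          exact_mod_cast this
        positivity
      have hθlt : θ < π := by
        rw [hθk, div_lt_iff₀ hmR]
        have : (k:ℝ) < m := by exact_mod_cast (by omega : k < m)
        nlinarith
      have hsin : 0 < Real.sin θ := Real.sin_pos_of_pos_of_lt_pi hθpos hθlt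
      have hA := Polynomial.Chebyshev.U_real_cos θ ((m:ℤ)-1)
      have hB := Polynomial.Chebyshev.U_real_cos θ ((m:ℤ)-2)
      have hq1 : q.eval (Real.cos θ) * Real.sin θ
          = Real.sin ((m:ℝ) * θ) + Real.sin (((m:ℝ) - 1) * θ) := by
        rw [hq_def, eval_add, add_mul, hA, hB]
        congr 2
        · push_cast; ring
        · push_cast; ring
      have hmθ : (m:ℝ) * θ = (k:ℝ) * π := by
        rw [hθk]; field_simp
      have hm1θ : ((m:ℝ) - 1) * θ = (k:ℝ) * π - θ := by
        rw [hθk]; field_simp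
      rw [hmθ, hm1θ, Real.sin_nat_mul_pi, Real.sin_nat_mul_pi_sub, zero_add] at hq1
      have hval : q.eval (Real.cos θ) = -((-1:ℝ)^k) :=
        mul_right_cancel₀ (ne_of_gt hsin) (by rw [hq1]; ring)
      rw [hpc, ← hθ, hval]
      have : (-1:ℝ)^k = -(-1:ℝ)^(m-1-j) := by
        rw [show k = (m-1-j)+1 by omega, pow_succ]; ring
      rw [this]; ring
  have hterm : ∀ j, j < m →
      ∏ i ∈ (range m).erase j, x i / |x i - x j|
        = (-1:ℝ)^j * (Lagrange.basis (range m) c j).eval (-s) := by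
    intro j hj
    have hbasis : (Lagrange.basis (range m) c j).eval (-s)
        = ∏ i ∈ (range m).erase j, (c j - c i)⁻¹ * (-s - c i) := by
      rw [Lagrange.basis, eval_prod]
      refine prod_congr rfl fun i _ => ?_
      rw [Lagrange.basisDivisor, eval_mul, eval_C, eval_sub, eval_X, eval_C]
    rw [hbasis]
    have hg : ∀ i, i < m → c i ≠ c j → x i / |x i - x j| = (s + c i) / |c i - c j| := by
      intro i him hne
      have habs : 0 < |c i - c j| := abs_pos.mpr (sub_ne_zero.mpr hne)
      rw [hxsub, hxc, abs_div, abs_of_pos hs]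
      rw [div_div_div_cancel_right₀ hs.ne']
    have hsplit : (range m).erase j = range j ∪ Ico (j+1) m := by
      ext i; simp only [mem_erase, mem_range, mem_union, mem_Ico]; omega
    have hdisj : Disjoint (range j) (Ico (j+1) m) := by
      simp only [Finset.disjoint_left, mem_range, mem_Ico]; omega
    rw [hsplit, prod_union hdisj, prod_union hdisj]
    have h1 : ∏ i ∈ range j, x i / |x i - x j|
        = (-1:ℝ)^j * ∏ i ∈ range j, (c j - c i)⁻¹ * (-s - c i) := by
      have hcongr : ∀ i ∈ range j, x i / |x i - x j|
          = (-1) * ((c j - c i)⁻¹ * (-s - c i)) := by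
        intro i hi
        rw [mem_range] at hi
        have him : i < m := lt_trans hi hj
        have hlt : c i < c j := hmono i j hi hj
        rw [hg i him (ne_of_lt hlt), abs_of_neg (by linarith : c i - c j < 0),
          show -(c i - c j) = c j - c i by ring, div_eq_mul_inv]
        ring
      rw [prod_congr rfl hcongr, prod_mul_distrib, prod_const, card_range]
    have h2 : ∏ i ∈ Ico (j+1) m, x i / |x i - x j|
        = ∏ i ∈ Ico (j+1) m, (c j - c i)⁻¹ * (-s - c i) := by
      refine prod_congr rfl fun i hi => ?_
      rw [mem_Ico] at hi
      have hlt : c j < c i := hmono j i (by omega) hi.2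
      rw [hg i hi.2 (ne_of_gt hlt), abs_of_pos (by linarith : 0 < c i - c j),
        div_eq_mul_inv, show c j - c i = -(c i - c j) by ring, inv_neg]
      ring
    rw [h1, h2]
    ring
  have hsum : ∑ j ∈ range m, ∏ i ∈ (range m).erase j, x i / |x i - x j|
      = (-1:ℝ)^(m-1) * p.eval (-s) := by
    have hinterp := Lagrange.eq_interpolate (f := p) hinj hpdeg
    have hev : p.eval (-s)
        = ∑ i ∈ range m, p.eval (c i) * (Lagrange.basis (range m) c i).eval (-s) := by
      conv_lhs => rw [hinterp]
      rw [Lagrange.interpolate_apply, eval_finset_sum]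
      exact sum_congr rfl fun i _ => by rw [eval_mul, eval_C]
    rw [hev, mul_sum]
    refine sum_congr rfl fun j hj => ?_
    rw [mem_range] at hj
    rw [hterm j hj, hpval j hj]
    have hsgn : (-1:ℝ)^(m-1) * (-1:ℝ)^(m-1-j) = (-1:ℝ)^j := by
      rw [← pow_add, show (m-1)+(m-1-j) = j + 2*(m-1-j) by omega, pow_add, pow_mul]
      norm_num
    rw [← mul_assoc, hsgn]
  rw [hsum]
  have hcosh2 : Real.cosh (2*β) = 2*s + 1 := by
    rw [Real.cosh_two_mul, Real.cosh_sq]; ring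
  have hpe : p.eval (-s) = q.eval (-Real.cosh (2*β)) := by
    rw [hp_def, eval_comp]
    congr 1
    simp only [eval_sub, eval_mul, eval_C, eval_X, eval_one]
    rw [hcosh2]; ring
  rw [hpe, hq_def, eval_add, ← e1, ← e2, auxU_eval_neg, auxU_eval_neg]
  have hs2 : (0:ℝ) < Real.sinh (2*β) := Real.sinh_pos_iff.mpr (by linarith)
  have hcb : Real.cosh β ≠ 0 := ne_of_gt (Real.cosh_pos β)
  have hsgn2 : (-1:ℝ)^(m-1) * (-1:ℝ)^(m-1) = 1 := by
    rw [← pow_add, show (m-1)+(m-1) = 2*(m-1) by ring, pow_mul]; norm_num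
  have hsgn3 : (-1:ℝ)^(m-1) * (-1:ℝ)^(m-2) = -1 := by
    rw [← pow_add, show (m-1)+(m-2) = 2*(m-2)+1 by omega, pow_succ, pow_mul]; norm_num
  rw [mul_add, ← mul_assoc, ← mul_assoc, hsgn2, hsgn3, one_mul, ← hβγ]
  have hU1 : (U ℝ ((m-1:ℕ):ℤ)).eval (Real.cosh (2*β)) * Real.sinh (2*β)
      = Real.sinh ((2*(m:ℝ)-1)*β + β) := by
    rw [auxU_cosh (((m-1:ℕ):ℤ)) (2*β)]
    congr 1
    push_cast [Nat.cast_sub (show 1 ≤ m by omega)]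
    ring
  have hU2 : (U ℝ ((m-2:ℕ):ℤ)).eval (Real.cosh (2*β)) * Real.sinh (2*β)
      = Real.sinh ((2*(m:ℝ)-1)*β - β) := by
    rw [auxU_cosh (((m-2:ℕ):ℤ)) (2*β)]
    congr 1
    push_cast [Nat.cast_sub hm]
    ring
  refine mul_right_cancel₀ (ne_of_gt hs2) ?_
  rw [Real.sinh_two_mul] at hU1 hU2 ⊢
  rw [Real.sinh_add] at hU1
  rw [Real.sinh_sub] at hU2
  have hcc : Real.cosh β * (Real.cosh β)⁻¹ = 1 := mul_inv_cancel₀ hcb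
  linear_combination hU1 - hU2 - 2*Real.cosh ((2*(m:ℝ)-1)*β)*Real.sinh β * hcc
end

section
/- Let m ≥ 2 and let y_0, y_1, ..., y_{m−1} be pairwise distinct complex numbers, b_k = ∏_{i≠k} 1/(y_i − y_k), and p a polynomial with p'(s) = ∏_{j=1}^{m−1}(s − y_j). Then for every k = 1,...,m−1: ∑_{j≠k} [b_k p(y_k) + b_j p(y_j)]/(y_j − y_k) = (−1)^{m−1}/m. -/
open Finset Polynomial

lemma lagA (m : ℕ) (y : ℕ → ℂ) (hy : Set.InjOn y (range m)) (q : ℂ[X])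
    (hq : q.degree < m) :
    ∑ j ∈ range m, (∏ i ∈ (range m).erase j, (y j - y i)⁻¹) * q.eval (y j)
      = q.coeff (m - 1) := by
  have hcard : (range m).card = m := card_range m
  have hq' : q.degree < ((range m).card : ℕ) := by rwa [hcard]
  have h := Lagrange.eq_interpolate hy hq'
  conv_rhs => rw [h]
  rw [Lagrange.interpolate_apply, finset_sum_coeff]
  refine sum_congr rfl fun j hj => ?_
  rw [coeff_C_mul]
  have hb : (Lagrange.basis (range m) y j).natDegree = m - 1 := by
    rw [Lagrange.natDegree_basis hy hj, hcard]
  have hlc : (Lagrange.basis (range m) y j).coeff (m-1) =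
      ∏ i ∈ (range m).erase j, (y j - y i)⁻¹ := by
    rw [← hb, ← leadingCoeff, Lagrange.basis, leadingCoeff_prod]
    refine prod_congr rfl fun i hi => ?_
    have hne : y j ≠ y i :=
      hy.ne hj (mem_of_mem_erase hi) (ne_of_mem_erase hi).symm
    rw [Lagrange.basisDivisor, leadingCoeff_mul, leadingCoeff_C, leadingCoeff_X_sub_C, mul_one]
  rw [hlc]; ring

lemma derivative_finset_prod (s : Finset ℕ) (f : ℕ → ℂ[X]) :
    derivative (∏ i ∈ s, f i) = ∑ i ∈ s, (∏ j ∈ s.erase i, f j) * derivative (f i) := by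
  induction s using Finset.induction_on with
  | empty => simp
  | @insert a s ha ih =>
    rw [prod_insert ha, derivative_mul, ih, sum_insert ha, erase_insert ha, mul_sum]
    congr 1
    · exact mul_comm _ _
    · refine sum_congr rfl fun i hi => ?_
      have hia : i ≠ a := by rintro rfl; exact ha hi
      rw [erase_insert_of_ne hia.symm, prod_insert (fun h => ha (mem_of_mem_erase h)), mul_assoc]

/-- for pairwise distinct `y 0, ..., y (m-1)` in ℂ,
`b k = ∏_{i≠k} 1/(y i - y k)`, and `p` any antiderivative of
`∏_{j=1}^{m-1} (s - y j)`, one has for each `k = 1, ..., m-1`: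
`∑_{j≠k} (b k p(y k) + b j p(y j))/(y j - y k) = (-1)^{m-1}/m`. -/
theorem stmt9 (m : ℕ) (hm : 2 ≤ m) (y : ℕ → ℂ)
    (hy : ∀ i < m, ∀ j < m, i ≠ j → y i ≠ y j)
    (b : ℕ → ℂ) (hb : ∀ k, b k = ∏ i ∈ (range m).erase k, 1 / (y i - y k))
    (p : Polynomial ℂ)
    (hp : derivative p = ∏ j ∈ Ico 1 m, (X - C (y j))) :
    ∀ k, 1 ≤ k → k ≤ m - 1 →
      ∑ j ∈ (range m).erase k,
          (b k * p.eval (y k) + b j * p.eval (y j)) / (y j - y k)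
        = (-1) ^ (m - 1) / m := by
  intro k hk1 hk2
  have hklt : k < m := by omega
  have hkr : k ∈ range m := mem_range.mpr hklt
  have hinj : Set.InjOn y (range m) := by
    intro i hi j hj hij
    by_contra hne
    exact hy i (mem_range.mp hi) j (mem_range.mp hj) hne hij
  have hm0 : (m : ℂ) ≠ 0 := Nat.cast_ne_zero.mpr (by omega)
  set a := y k with ha
  set c : ℕ → ℂ := fun j => ∏ i ∈ (range m).erase j, (y j - y i)⁻¹ with hc
  -- distinctness facts
  have hyne : ∀ j ∈ (range m).erase k, y j - a ≠ 0 := by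
    intro j hj
    have hjm := mem_range.mp (mem_of_mem_erase hj)
    exact sub_ne_zero.mpr (hy j hjm k hklt (ne_of_mem_erase hj))
  -- b in terms of c
  have hbc : ∀ j ∈ range m, b j = (-1) ^ (m - 1) * c j := by
    intro j hj
    rw [hb, hc]
    have : ∀ i ∈ (range m).erase j, 1 / (y i - y j) = (-1) * (y j - y i)⁻¹ := by
      intro i hi
      rw [one_div, ← neg_sub, inv_neg, neg_one_mul]
    rw [prod_congr rfl this, prod_mul_distrib, prod_const,
      card_erase_of_mem hj, card_range]
  -- Part 1: the polynomial P and facts about p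
  have hk' : k ∈ Ico 1 m := mem_Ico.mpr ⟨hk1, hklt⟩
  set P : ℂ[X] := ∏ j ∈ Ico 1 m, (X - C (y j)) with hP
  have hPm : P.Monic := monic_prod_of_monic _ _ fun i _ => monic_X_sub_C _
  have hPd : P.natDegree = m - 1 := by
    rw [hP, natDegree_prod _ _ (fun i _ => X_sub_C_ne_zero (y i))]
    simp [natDegree_X_sub_C, Nat.card_Ico]
  have hm1c : ((m - 1 : ℕ) : ℂ) + 1 = (m : ℂ) := by
    rw [Nat.cast_sub (by omega : 1 ≤ m)]; ring
  have hpm : p.coeff m = 1 / m := by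
    have h1 : P.coeff (m - 1) = 1 := by
      rw [← hPd]; exact hPm.coeff_natDegree
    rw [← hp, coeff_derivative] at h1
    have h2 : m - 1 + 1 = m := by omega
    rw [h2] at h1
    rw [hm1c] at h1
    field_simp
    linear_combination h1
  have hpdeg : p.natDegree ≤ m := by
    refine natDegree_le_iff_coeff_eq_zero.mpr fun N hN => ?_
    have h1 : P.coeff (N - 1) = 0 :=
      coeff_eq_zero_of_natDegree_lt (by omega)
    rw [← hp, coeff_derivative] at h1
    have h2 : N - 1 + 1 = N := by omega
    rw [h2] at h1
    have hN0 : ((N - 1 : ℕ) : ℂ) + 1 ≠ 0 := by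
      have : ((N - 1 : ℕ) : ℂ) + 1 = ((N : ℕ) : ℂ) := by
        rw [Nat.cast_sub (by omega : 1 ≤ N)]; ring
      rw [this]
      exact Nat.cast_ne_zero.mpr (by omega)
    exact (mul_eq_zero.mp h1).resolve_right hN0
  -- q1
  obtain ⟨q1, hq1⟩ : X - C a ∣ p - C (p.eval a) := X_sub_C_dvd_sub_C_eval
  have hq1d : q1.natDegree ≤ m - 1 := by
    by_cases hq10 : q1 = 0
    · simp [hq10]
    have hmul : ((X - C a) * q1).natDegree = 1 + q1.natDegree := by
      rw [natDegree_mul (X_sub_C_ne_zero a) hq10, natDegree_X_sub_C]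
    have hle : ((X - C a) * q1).natDegree ≤ m := by
      rw [← hq1]
      refine le_trans (natDegree_sub_le _ _) ?_
      simp [hpdeg, natDegree_C]
    omega
  have hq1deg : q1.degree < (m : ℕ) := by
    refine lt_of_le_of_lt (degree_le_natDegree) ?_
    exact_mod_cast lt_of_le_of_lt hq1d (by omega : m - 1 < m)
  have hq1c : q1.coeff (m - 1) = 1 / m := by
    have h1 : ((X - C a) * q1).coeff m = q1.coeff (m - 1) - q1.coeff m * a := by
      rw [mul_comm]
      have h2 : m - 1 + 1 = m := by omega
      rw [← h2, coeff_mul_X_sub_C, h2]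
    have h3 : q1.coeff m = 0 := coeff_eq_zero_of_natDegree_lt (by omega)
    rw [← hq1, h3, coeff_sub, hpm, coeff_C, if_neg (by omega : ¬ m = 0)] at h1
    linear_combination -h1
  have hq1a : q1.eval a = 0 := by
    have hd := congrArg derivative hq1
    rw [derivative_sub, derivative_C, sub_zero, hp, derivative_mul] at hd
    have hXa : derivative (X - C a) = 1 := by
      rw [derivative_sub, derivative_X, derivative_C, sub_zero]
    rw [hXa, one_mul] at hd
    have he := congrArg (eval a) hd
    rw [eval_add, eval_mul, eval_sub, eval_X, eval_C, sub_self, zero_mul, add_zero] at he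
    have hPa : eval a P = 0 := by
      rw [hP, eval_prod]
      exact prod_eq_zero hk' (by simp [ha])
    rw [← he]; exact hPa
  have hq1j : ∀ j ∈ (range m).erase k, q1.eval (y j)
      = (p.eval (y j) - p.eval a) * (y j - a)⁻¹ := by
    intro j hj
    have he := congrArg (eval (y j)) hq1
    rw [eval_sub, eval_C, eval_mul, eval_sub, eval_X, eval_C] at he
    rw [eq_mul_inv_iff_mul_eq₀ (hyne j hj), he]
    ring
  -- key1
  have sum1 := lagA m y hinj q1 hq1deg
  rw [hq1c] at sum1
  rw [← sum_erase_add _ _ hkr] at sum1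
  have hck0 : (∏ i ∈ (range m).erase k, (y k - y i)⁻¹) * q1.eval (y k) = 0 := by
    rw [← ha, hq1a, mul_zero]
  rw [hck0, add_zero] at sum1
  have key1 : ∑ j ∈ (range m).erase k,
      c j * ((p.eval (y j) - p.eval a) * (y j - a)⁻¹) = 1 / m := by
    rw [← sum1]
    exact sum_congr rfl fun j hj => by rw [hq1j j hj]
  -- Part 2 : the polynomial u
  set u : ℂ[X] := ∏ i ∈ (range m).erase k, (X - C (y i)) with hu
  set E : ℂ := u.eval a with hE
  have hEprod : E = ∏ i ∈ (range m).erase k, (a - y i) := by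
    rw [hE, hu, eval_prod]; simp
  have hane : ∀ i ∈ (range m).erase k, a - y i ≠ 0 := fun i hi =>
    sub_ne_zero.mpr (hy k hklt i (mem_range.mp (mem_of_mem_erase hi)) (ne_of_mem_erase hi).symm)
  have hEne : E ≠ 0 := by
    rw [hEprod]
    exact prod_ne_zero_iff.mpr hane
  have hckE : c k = E⁻¹ := by
    rw [hc, hEprod, ← prod_inv_distrib]
  have hud : u.natDegree = m - 1 := by
    rw [hu, natDegree_prod _ _ (fun i _ => X_sub_C_ne_zero (y i))]
    simp [natDegree_X_sub_C, card_erase_of_mem hkr, card_range]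
  obtain ⟨q2, hq2⟩ : X - C a ∣ u - C E := X_sub_C_dvd_sub_C_eval
  have hq2d : q2.natDegree ≤ m - 2 := by
    by_cases hq20 : q2 = 0
    · simp [hq20]
    have hmul : ((X - C a) * q2).natDegree = 1 + q2.natDegree := by
      rw [natDegree_mul (X_sub_C_ne_zero a) hq20, natDegree_X_sub_C]
    have hle : ((X - C a) * q2).natDegree ≤ m - 1 := by
      rw [← hq2]
      refine le_trans (natDegree_sub_le _ _) ?_
      simp [hud, natDegree_C]
    omega
  have hq2deg : q2.degree < (m : ℕ) := by
    refine lt_of_le_of_lt (degree_le_natDegree) ?_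
    exact_mod_cast lt_of_le_of_lt hq2d (by omega : m - 2 < m)
  have hq2c : q2.coeff (m - 1) = 0 := coeff_eq_zero_of_natDegree_lt (by omega)
  have hq2a : q2.eval a = (derivative u).eval a := by
    have hd := congrArg derivative hq2
    rw [derivative_sub, derivative_C, sub_zero, derivative_mul] at hd
    have hXa : derivative (X - C a) = 1 := by
      rw [derivative_sub, derivative_X, derivative_C, sub_zero]
    rw [hXa, one_mul] at hd
    have he := congrArg (eval a) hd
    rw [eval_add, eval_mul, eval_sub, eval_X, eval_C, sub_self, zero_mul, add_zero] at he
    exact he.symm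
  have hq2j : ∀ j ∈ (range m).erase k, q2.eval (y j) = -E * (y j - a)⁻¹ := by
    intro j hj
    have he := congrArg (eval (y j)) hq2
    rw [eval_sub, eval_C, eval_mul, eval_sub, eval_X, eval_C] at he
    have huj : eval (y j) u = 0 := by
      rw [hu, eval_prod]
      exact prod_eq_zero hj (by simp)
    rw [huj, zero_sub] at he
    rw [eq_mul_inv_iff_mul_eq₀ (hyne j hj)]
    linear_combination -he
  have hu' : (derivative u).eval a
      = E * ∑ i ∈ (range m).erase k, (a - y i)⁻¹ := by
    rw [hu, derivative_finset_prod, eval_finset_sum, mul_sum]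
    refine sum_congr rfl fun i hi => ?_
    have hXa : derivative (X - C (y i)) = 1 := by
      rw [derivative_sub, derivative_X, derivative_C, sub_zero]
    rw [hXa, mul_one, eval_prod]
    simp only [eval_sub, eval_X, eval_C]
    have hai : a - y i ≠ 0 := hane i hi
    have hprod : (a - y i) * ∏ x ∈ ((range m).erase k).erase i, (a - y x) = E := by
      rw [hEprod]; exact mul_prod_erase _ (fun l => a - y l) hi
    rw [← hprod]
    field_simp
  -- key2
  set T : ℂ := ∑ j ∈ (range m).erase k, (y j - a)⁻¹ with hT
  have sum2 := lagA m y hinj q2 hq2deg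
  rw [hq2c, ← sum_erase_add _ _ hkr] at sum2
  have sum2' : (∑ j ∈ (range m).erase k, c j * q2.eval (y j)) + c k * q2.eval (y k) = 0 := sum2
  have h4 : ∑ i ∈ (range m).erase k, (a - y i)⁻¹ = -T := by
    rw [hT, ← Finset.sum_neg_distrib]
    refine sum_congr rfl fun i hi => ?_
    rw [← inv_neg, neg_sub]
  have h3 : c k * q2.eval a = -T := by
    rw [hq2a, hu', h4, hckE, ← mul_assoc, inv_mul_cancel₀ hEne, one_mul]
  rw [← ha, h3] at sum2'
  have h2 : ∑ j ∈ (range m).erase k, c j * q2.eval (y j)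
      = -E * ∑ j ∈ (range m).erase k, c j * (y j - a)⁻¹ := by
    rw [mul_sum]
    refine sum_congr rfl fun j hj => ?_
    rw [hq2j j hj]; ring
  rw [h2] at sum2'
  have key2 : ∑ j ∈ (range m).erase k, c j * (y j - a)⁻¹ = -(c k * T) := by
    have hT2 : T = -(E * ∑ j ∈ (range m).erase k, c j * (y j - a)⁻¹) := by
      linear_combination -sum2'
    rw [hckE, hT2, mul_neg, neg_neg, ← mul_assoc, inv_mul_cancel₀ hEne, one_mul]
  -- final computation
  have hgoal : ∑ j ∈ (range m).erase k,
      (b k * p.eval (y k) + b j * p.eval (y j)) / (y j - y k)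
      = (-1) ^ (m - 1) * ∑ j ∈ (range m).erase k,
          (c k * p.eval a + c j * p.eval (y j)) * (y j - a)⁻¹ := by
    rw [mul_sum]
    refine sum_congr rfl fun j hj => ?_
    rw [hbc k hkr, hbc j (mem_of_mem_erase hj), ← ha, div_eq_mul_inv]
    ring
  rw [hgoal]
  have h6 : ∑ j ∈ (range m).erase k,
      (c j * p.eval (y j) * (y j - a)⁻¹ - p.eval a * (c j * (y j - a)⁻¹)) = 1 / m := by
    rw [← key1]
    exact sum_congr rfl fun j hj => by ring
  rw [sum_sub_distrib, ← mul_sum, key2] at h6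
  have h7 : ∑ j ∈ (range m).erase k,
      (c k * p.eval a + c j * p.eval (y j)) * (y j - a)⁻¹
      = p.eval a * (c k * T) + ∑ j ∈ (range m).erase k,
          c j * p.eval (y j) * (y j - a)⁻¹ := by
    have : ∀ j ∈ (range m).erase k,
        (c k * p.eval a + c j * p.eval (y j)) * (y j - a)⁻¹
        = p.eval a * (c k * (y j - a)⁻¹) + c j * p.eval (y j) * (y j - a)⁻¹ := by
      intro j hj; ring
    rw [sum_congr rfl this, sum_add_distrib]
    congr 1
    rw [hT, mul_sum, mul_sum]
  rw [h7]
  have h8 : p.eval a * (c k * T) + ∑ j ∈ (range m).erase k,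
      c j * p.eval (y j) * (y j - a)⁻¹ = 1 / m := by
    linear_combination h6
  rw [h8]
  ring
end

section
/- Let m ≥ 2 and y_0, ..., y_{m−1} pairwise distinct reals. Define the m×m matrix B̃ with off-diagonal entries B̃_{jk} = 1/(y_j − y_k) (j ≠ k) and diagonal entries B̃_{jj} = ∑_{l≠j} 1/(y_j − y_l). Then B̃ is similar to the nilpotent single Jordan block J of size m (with ones on the superdiagonal); in particular rank B̃ = m−1 and ker B̃ is one-dimensional. -/
open Finset Matrix Polynomial

lemma deriv_finset_prod' {ι : Type*} [DecidableEq ι] (s : Finset ι) (f : ι → ℝ[X]) :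
    derivative (∏ i ∈ s, f i) = ∑ i ∈ s, (∏ j ∈ s.erase i, f j) * derivative (f i) := by
  induction s using Finset.induction_on with
  | empty => simp
  | @insert a s ha ih =>
      simp only [Finset.prod_insert ha, derivative_mul, ih, Finset.sum_insert ha,
        Finset.erase_insert ha, Finset.mul_sum]
      congr 1
      · ring
      · refine Finset.sum_congr rfl fun i hi => ?_
        rw [Finset.erase_insert_of_ne (by rintro rfl; exact ha hi),
          Finset.prod_insert (fun h => ha (Finset.mem_of_mem_erase h))]
        ring

lemma eval_deriv_basis {m : ℕ} (y : Fin m → ℝ) (k j : Fin m) :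
    (derivative (Lagrange.basis univ y k)).eval (y j) =
      ∑ l ∈ univ.erase k,
        (∏ l' ∈ (univ.erase k).erase l, ((y k - y l')⁻¹ * (y j - y l'))) * (y k - y l)⁻¹ := by
  rw [Lagrange.basis]
  simp_rw [Lagrange.basisDivisor]
  rw [deriv_finset_prod']
  simp [eval_prod, eval_finset_sum]

lemma eval_deriv_basis_self {m : ℕ} (y : Fin m → ℝ) (hy : Function.Injective y) (j : Fin m) :
    (derivative (Lagrange.basis univ y j)).eval (y j) = ∑ l ∈ univ.erase j, (y j - y l)⁻¹ := by
  rw [eval_deriv_basis]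
  refine Finset.sum_congr rfl fun l hl => ?_
  have h1 : ∏ l' ∈ (univ.erase j).erase l, ((y j - y l')⁻¹ * (y j - y l')) = 1 :=
    Finset.prod_eq_one fun l' hl' => inv_mul_cancel₀ (sub_ne_zero.mpr fun h =>
      (Finset.ne_of_mem_erase (Finset.mem_of_mem_erase hl')) (hy h).symm)
  rw [h1, one_mul]

lemma entry_lemma {m : ℕ} (y : Fin m → ℝ) (hy : Function.Injective y) {j k : Fin m}
    (hjk : j ≠ k) :
    (∏ i ∈ univ.erase j, (y i - y j)⁻¹) * (derivative (Lagrange.basis univ y k)).eval (y j)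
      = (y j - y k)⁻¹ * (∏ i ∈ univ.erase k, (y i - y k)⁻¹) := by
  have hne : ∀ {a c : Fin m}, a ≠ c → y a - y c ≠ 0 :=
    fun h => sub_ne_zero.mpr fun e => h (hy e)
  rw [eval_deriv_basis]
  rw [Finset.sum_eq_single j
    (fun l hl hlj => by
      have hjmem : j ∈ (univ.erase k).erase l :=
        Finset.mem_erase.mpr ⟨Ne.symm hlj, Finset.mem_erase.mpr ⟨hjk, Finset.mem_univ j⟩⟩
      rw [Finset.prod_eq_zero hjmem (by rw [sub_self, mul_zero]), zero_mul])
    (fun h => absurd (Finset.mem_erase.mpr ⟨hjk, Finset.mem_univ j⟩) h)]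
  have hS : (univ.erase j).erase k = (univ.erase k).erase j := Finset.erase_right_comm
  have hbj : ∏ i ∈ univ.erase j, (y i - y j)⁻¹
      = (y k - y j)⁻¹ * ∏ i ∈ (univ.erase k).erase j, (y i - y j)⁻¹ := by
    rw [← hS]
    exact (Finset.mul_prod_erase _ _ (Finset.mem_erase.mpr ⟨Ne.symm hjk, Finset.mem_univ k⟩)).symm
  have hbk : ∏ i ∈ univ.erase k, (y i - y k)⁻¹
      = (y j - y k)⁻¹ * ∏ i ∈ (univ.erase k).erase j, (y i - y k)⁻¹ := by
    exact (Finset.mul_prod_erase _ _ (Finset.mem_erase.mpr ⟨hjk, Finset.mem_univ j⟩)).symm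
  rw [hbj, hbk]
  have hprod : ∏ i ∈ (univ.erase k).erase j, ((y i - y j)⁻¹ * ((y k - y i)⁻¹ * (y j - y i)))
      = ∏ i ∈ (univ.erase k).erase j, (y i - y k)⁻¹ := by
    refine Finset.prod_congr rfl fun i hi => ?_
    have hij : i ≠ j := Finset.ne_of_mem_erase hi
    have hik : i ≠ k := Finset.ne_of_mem_erase (Finset.mem_of_mem_erase hi)
    have h1 : y i - y j ≠ 0 := hne hij
    have h2 : y k - y i ≠ 0 := hne (Ne.symm hik)
    rw [show y j - y i = -(y i - y j) by ring, show y i - y k = -(y k - y i) by ring, inv_neg]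
    field_simp
  have hsq : (y k - y j)⁻¹ * (y k - y j)⁻¹ = (y j - y k)⁻¹ * (y j - y k)⁻¹ := by
    rw [show y k - y j = -(y j - y k) by ring, inv_neg]; ring
  calc ((y k - y j)⁻¹ * ∏ i ∈ (univ.erase k).erase j, (y i - y j)⁻¹) *
        ((∏ l' ∈ (univ.erase k).erase j, ((y k - y l')⁻¹ * (y j - y l'))) * (y k - y j)⁻¹)
      = ((y k - y j)⁻¹ * (y k - y j)⁻¹) *
        ∏ i ∈ (univ.erase k).erase j, ((y i - y j)⁻¹ * ((y k - y i)⁻¹ * (y j - y i))) := by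
        rw [Finset.prod_mul_distrib]
        simp only [Finset.prod_mul_distrib]
        ring
    _ = (y j - y k)⁻¹ * ((y j - y k)⁻¹ * ∏ i ∈ (univ.erase k).erase j, (y i - y k)⁻¹) := by
        rw [hprod, hsq]; ring

lemma key_lemma {m : ℕ} (y : Fin m → ℝ) (hy : Function.Injective y) (p : ℝ[X])
    (hp : p.degree < (m : WithBot ℕ)) (j : Fin m) :
    p.derivative.eval (y j)
      = ∑ k, p.eval (y k) * (derivative (Lagrange.basis univ y k)).eval (y j) := by
  have hinj : Set.InjOn y (univ : Finset (Fin m)) := fun a _ c _ h => hy h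
  have hq := Lagrange.eq_interpolate hinj (f := p) (by simpa using hp)
  conv_lhs => rw [hq]
  rw [Lagrange.interpolate_apply, derivative_sum]
  simp [derivative_C_mul, eval_finset_sum]

lemma sum_lemma {m : ℕ} (y : Fin m → ℝ) (hy : Function.Injective y) (j : Fin m) (n : ℕ)
    (hn : n < m) :
    ∑ k : Fin m, (if j = k then ∑ l ∈ univ.erase j, 1 / (y j - y l) else 1 / (y j - y k))
        * ((∏ i ∈ univ.erase k, (y i - y k)⁻¹) * y k ^ n)
      = (∏ i ∈ univ.erase j, (y i - y j)⁻¹) * ((n : ℝ) * y j ^ (n - 1)) := by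
  have hdeg : (X ^ n : ℝ[X]).degree < (m : WithBot ℕ) := by
    simpa [degree_X_pow] using (by exact_mod_cast hn : (n : WithBot ℕ) < m)
  have hkey := key_lemma y hy (X ^ n) hdeg j
  rw [derivative_X_pow] at hkey
  simp only [eval_mul, eval_pow, eval_X, eval_natCast, eval_C] at hkey
  have hmul := congrArg (fun t => (∏ i ∈ univ.erase j, (y i - y j)⁻¹) * t) hkey
  simp only [Finset.mul_sum] at hmul
  rw [hmul]
  refine Finset.sum_congr rfl fun k _ => ?_
  by_cases hk : j = k
  · subst hk
    rw [if_pos rfl, eval_deriv_basis_self y hy j]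
    simp only [one_div]
    ring
  · rw [if_neg hk, one_div]
    have h := entry_lemma y hy hk
    linear_combination (-(y k ^ n)) * h

/-- the matrix `B̃` with off-diagonal entries `1/(y j - y k)` and
diagonal entries `∑_{l≠j} 1/(y j - y l)` is similar to the nilpotent single
Jordan block of size `m`; in particular its rank is `m - 1` and its kernel is
one-dimensional. -/
theorem stmt11 (m : ℕ) (hm : 2 ≤ m) (y : Fin m → ℝ) (hy : Function.Injective y)
    (B : Matrix (Fin m) (Fin m) ℝ)
    (hB : ∀ j k, B j k = if j = k then ∑ l ∈ univ.erase j, 1 / (y j - y l)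
      else 1 / (y j - y k))
    (J : Matrix (Fin m) (Fin m) ℝ)
    (hJ : ∀ i j : Fin m, J i j = if (i : ℕ) + 1 = (j : ℕ) then 1 else 0) :
    (∃ P : Matrix (Fin m) (Fin m) ℝ, IsUnit P.det ∧ B = P * J * P⁻¹) ∧
    B.rank = m - 1 ∧
    Module.finrank ℝ (LinearMap.ker B.mulVecLin) = 1 := by
  classical
  haveI : NeZero m := ⟨by omega⟩
  set b : Fin m → ℝ := fun k => ∏ i ∈ univ.erase k, (y i - y k)⁻¹ with hbdef
  have hbne : ∀ k : Fin m, b k ≠ 0 := fun k =>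
    Finset.prod_ne_zero_iff.mpr fun i hi =>
      inv_ne_zero (sub_ne_zero.mpr fun e => (Finset.ne_of_mem_erase hi) (hy e))
  set w : Fin m → ℝ := fun n => (((n : ℕ).factorial : ℝ))⁻¹ with hwdef
  have hwne : ∀ n : Fin m, w n ≠ 0 := fun n =>
    inv_ne_zero (by exact_mod_cast (Nat.factorial_pos _).ne')
  set P : Matrix (Fin m) (Fin m) ℝ :=
    Matrix.of (fun j n => b j * (y j ^ (n : ℕ) * w n)) with hPdef
  have hPfact : P = Matrix.diagonal b * (Matrix.vandermonde y * Matrix.diagonal w) := by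
    ext j n
    rw [hPdef, Matrix.diagonal_mul, Matrix.mul_diagonal, Matrix.vandermonde_apply]
    simp [mul_assoc]
  have hdet : IsUnit P.det := by
    rw [hPfact, Matrix.det_mul, Matrix.det_mul, Matrix.det_diagonal, Matrix.det_diagonal]
    exact isUnit_iff_ne_zero.mpr (mul_ne_zero
      (Finset.prod_ne_zero_iff.mpr fun k _ => hbne k)
      (mul_ne_zero (Matrix.det_vandermonde_ne_zero_iff.mpr hy)
        (Finset.prod_ne_zero_iff.mpr fun n _ => hwne n)))
  have hsum : ∀ (j : Fin m) (n : ℕ), n < m →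
      ∑ k, B j k * (b k * y k ^ n) = b j * ((n : ℝ) * y j ^ (n - 1)) := by
    intro j n hn
    simp_rw [hB]
    exact sum_lemma y hy j n hn
  have hBP : B * P = P * J := by
    ext j n
    rw [Matrix.mul_apply, Matrix.mul_apply]
    have hL : ∑ k, B j k * P k n = b j * (((n : ℕ) : ℝ) * y j ^ ((n : ℕ) - 1)) * w n := by
      calc ∑ k, B j k * P k n = (∑ k, B j k * (b k * y k ^ (n : ℕ))) * w n := by
            rw [Finset.sum_mul]
            refine Finset.sum_congr rfl fun k _ => ?_
            simp only [hPdef, Matrix.of_apply]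
            ring
        _ = _ := by rw [hsum j n n.isLt]
    rw [hL]
    by_cases h0 : (n : ℕ) = 0
    · rw [Finset.sum_eq_zero fun k _ => by rw [hJ, if_neg (by omega), mul_zero]]
      simp [h0]
    · obtain ⟨t, ht⟩ : ∃ t, (n : ℕ) = t + 1 := ⟨(n : ℕ) - 1, by omega⟩
      have htm : t < m := by omega
      have hR : ∑ k, P j k * J k n = P j ⟨t, htm⟩ := by
        rw [Finset.sum_eq_single ⟨t, htm⟩
          (fun k _ hk => by
            rw [hJ, if_neg (fun h => hk (Fin.ext (by simp at h ⊢; omega))), mul_zero])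
          (fun h => absurd (Finset.mem_univ _) h)]
        rw [hJ, if_pos (by simp [ht]), mul_one]
      rw [hR]
      simp only [hPdef, Matrix.of_apply, hwdef, ht]
      have hfact : ((t + 1).factorial : ℝ) = (t + 1) * (t.factorial : ℝ) := by
        rw [Nat.factorial_succ]; push_cast; ring
      have htne : (t.factorial : ℝ) ≠ 0 := by exact_mod_cast (Nat.factorial_pos t).ne'
      have htne1 : ((t : ℝ) + 1) ≠ 0 := by positivity
      rw [hfact]
      push_cast
      rw [mul_inv]
      field_simp
  have hmain : B = P * J * P⁻¹ := by
    calc B = B * (P * P⁻¹) := by rw [Matrix.mul_nonsing_inv _ hdet, Matrix.mul_one]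
      _ = B * P * P⁻¹ := by rw [Matrix.mul_assoc]
      _ = P * J * P⁻¹ := by rw [hBP]
  -- rank-nullity
  have hrn : ∀ A : Matrix (Fin m) (Fin m) ℝ,
      A.rank + Module.finrank ℝ (LinearMap.ker A.mulVecLin) = m := by
    intro A
    have h := LinearMap.finrank_range_add_finrank_ker A.mulVecLin
    rw [Module.finrank_pi] at h
    simpa [Matrix.rank] using h
  -- kernel of J
  have hxk : ∀ x : Fin m → ℝ, x ∈ LinearMap.ker J.mulVecLin →
      ∀ k : Fin m, (k : ℕ) ≠ 0 → x k = 0 := by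
    intro x hx k hk
    have hxv : J.mulVec x = 0 := hx
    have h1 : J.mulVec x ⟨(k : ℕ) - 1, by omega⟩ = x k := by
      simp only [Matrix.mulVec, dotProduct, hJ]
      rw [Finset.sum_eq_single k
        (fun j _ hjk => by
          rw [if_neg (fun h => hjk (Fin.ext (by omega))), zero_mul])
        (fun h => absurd (Finset.mem_univ _) h)]
      rw [if_pos (by omega), one_mul]
    rw [hxv] at h1
    exact h1.symm
  have hkerJ : Module.finrank ℝ (LinearMap.ker J.mulVecLin) = 1 := by
    let f : (LinearMap.ker J.mulVecLin) →ₗ[ℝ] ℝ :=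
      (LinearMap.proj (0 : Fin m)) ∘ₗ (LinearMap.ker J.mulVecLin).subtype
    have hinjf : Function.Injective f := by
      rw [← LinearMap.ker_eq_bot, Submodule.eq_bot_iff]
      rintro ⟨x, hx⟩ hfx
      have hx0 : x 0 = 0 := hfx
      ext k
      by_cases hk : (k : ℕ) = 0
      · have : k = 0 := Fin.ext (by simpa using hk)
        simpa [this] using hx0
      · simpa using hxk x hx k hk
    have hsurf : Function.Surjective f := by
      intro r
      have hmem : Pi.single (0 : Fin m) r ∈ LinearMap.ker J.mulVecLin := by
        rw [LinearMap.mem_ker, Matrix.mulVecLin_apply]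
        funext i
        simp only [Matrix.mulVec, dotProduct, hJ, Pi.zero_apply]
        refine Finset.sum_eq_zero fun jj _ => ?_
        by_cases hjj : jj = 0
        · rw [if_neg (by simp [hjj]), zero_mul]
        · rw [Pi.single_eq_of_ne hjj, mul_zero]
      exact ⟨⟨Pi.single (0 : Fin m) r, hmem⟩, by simp [f]⟩
    have e : (LinearMap.ker J.mulVecLin) ≃ₗ[ℝ] ℝ :=
      LinearEquiv.ofBijective f ⟨hinjf, hsurf⟩
    rw [e.finrank_eq, Module.finrank_self]
  have hrankJ : J.rank = m - 1 := by have := hrn J; omega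
  have hrankB : B.rank = m - 1 := by
    rw [hmain, Matrix.rank_mul_eq_left_of_isUnit_det P⁻¹ (P * J)
        (Matrix.isUnit_nonsing_inv_det P hdet),
      Matrix.rank_mul_eq_right_of_isUnit_det P J hdet, hrankJ]
  refine ⟨⟨P, hdet, hmain⟩, hrankB, ?_⟩
  have := hrn B
  omega
end

section
/- If p is a real polynomial of degree m ≥ 1 with the equi-oscillation property on [−1,1], then p equals the Chebyshev polynomial T_m of the first kind. -/
open Polynomial

namespace Stmt12Aux

open Polynomial.Chebyshev

lemma Taux : ∀ m : ℕ, (T ℝ (m:ℤ)).natDegree ≤ m ∧ (T ℝ (m:ℤ)).coeff m = 2^(m-1) := by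
  intro m
  induction m using Nat.strong_induction_on with
  | _ m ih =>
    match m with
    | 0 => simp [Polynomial.Chebyshev.T_zero]
    | 1 => simp [Polynomial.Chebyshev.T_one]
    | (k+2) =>
      have h1 := ih (k+1) (by omega)
      have h0 := ih k (by omega)
      have hT : T ℝ ((k+2 : ℕ) : ℤ) = 2 * X * T ℝ ((k+1 : ℕ) : ℤ) - T ℝ (k : ℤ) := by
        push_cast
        exact Polynomial.Chebyshev.T_add_two ℝ k
      constructor
      · rw [hT]
        refine le_trans (natDegree_sub_le _ _) ?_
        simp only [max_le_iff]
        constructor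
        · refine le_trans (natDegree_mul_le) ?_
          have : (2 * X : ℝ[X]).natDegree ≤ 1 := by
            refine le_trans (natDegree_mul_le) ?_
            simp
          omega
        · omega
      · rw [hT]
        rw [coeff_sub]
        have hz : (T ℝ (k:ℤ)).coeff (k+2) = 0 :=
          coeff_eq_zero_of_natDegree_lt (by omega)
        have : (2 * X * T ℝ ((k+1:ℕ):ℤ)).coeff (k+2) = 2 * (T ℝ ((k+1:ℕ):ℤ)).coeff (k+1) := by
          rw [mul_assoc, coeff_ofNat_mul]
          congr 1
          exact coeff_X_mul _ _
        rw [this, hz, h1.2]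
        simp [pow_succ]
        ring

lemma Teval1 (n : ℤ) : (T ℝ n).eval 1 = 1 := by
  have := Polynomial.Chebyshev.T_real_cos 0 n
  simpa using this

lemma TODE (m : ℕ) :
    (1 - X^2) * derivative (derivative (T ℝ (m:ℤ))) - X * derivative (T ℝ (m:ℤ))
      + C ((m:ℝ)^2) * T ℝ (m:ℤ) = 0 := by
  have hd : derivative (T ℝ (m:ℤ)) = ((m:ℤ) : ℝ[X]) * U ℝ ((m:ℤ) - 1) :=
    Polynomial.Chebyshev.T_derivative_eq_U (R := ℝ) (m:ℤ)
  have hd2 : derivative (derivative (T ℝ (m:ℤ)))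
      = ((m:ℤ) : ℝ[X]) * derivative (U ℝ ((m:ℤ) - 1)) := by
    rw [hd, derivative_mul]
    simp
  have key := Polynomial.Chebyshev.add_one_mul_T_eq_poly_in_U (R := ℝ) ((m:ℤ) - 1)
  rw [sub_add_cancel] at key
  have hC : C ((m:ℝ)^2) = ((m:ℤ) : ℝ[X])^2 := by
    rw [map_pow, Polynomial.C_eq_natCast]; norm_cast
  rw [hd2, hd, hC]
  linear_combination (norm := (push_cast; ring_nf)) ((m:ℤ) : ℝ[X]) * key

lemma doubleDvd (f : ℝ[X]) (a : ℝ) (h0 : f.eval a = 0)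
    (h1 : (derivative f).eval a = 0) : (X - C a)^2 ∣ f := by
  obtain ⟨g, hg⟩ := (dvd_iff_isRoot.mpr h0)
  have hd : derivative f = g + (X - C a) * derivative g := by
    rw [hg, derivative_mul]
    simp [derivative_sub]
  have hg0 : g.eval a = 0 := by
    have := h1
    rw [hd] at this
    simpa using this
  obtain ⟨g2, hg2⟩ := (dvd_iff_isRoot.mpr hg0)
  exact ⟨g2, by rw [hg, hg2]; ring⟩

lemma odeUnique (m : ℕ) (r : ℝ[X])
    (h : (1 - X^2) * derivative (derivative r) - X * derivative r
      + C ((m:ℝ)^2) * r = 0)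
    (hhigh : ∀ k, m ≤ k → r.coeff k = 0) : r = 0 := by
  set B := derivative r with hB
  set A := derivative B with hA
  have hXB : ∀ n : ℕ, (X * B).coeff n = (n:ℝ) * r.coeff n := by
    intro n
    match n with
    | 0 => simp [mul_coeff_zero]
    | (j+1) =>
      rw [coeff_X_mul, hB, coeff_derivative]
      push_cast; ring
  have hAc : ∀ n : ℕ, A.coeff n = ((n:ℝ)+2) * ((n:ℝ)+1) * r.coeff (n+2) := by
    intro n
    rw [hA, coeff_derivative, hB, coeff_derivative]
    push_cast; ring
  have hXA : ∀ n : ℕ, (X^2 * A).coeff n = (n:ℝ) * ((n:ℝ) - 1) * r.coeff n := by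
    intro n
    match n with
    | 0 => simp [mul_coeff_zero]
    | 1 => rw [coeff_X_pow_mul']; simp
    | (j+2) =>
      rw [coeff_X_pow_mul A 2 j, hAc j]
      push_cast; ring
  have hrec : ∀ k : ℕ, ((k:ℝ)+2) * ((k:ℝ)+1) * r.coeff (k+2)
      = ((k:ℝ)^2 - (m:ℝ)^2) * r.coeff k := by
    intro k
    have e : (1 - X^2 : ℝ[X]) * A = A - X^2 * A := by ring
    rw [e] at h
    have hk := congrArg (fun f : ℝ[X] => f.coeff k) h
    simp only [coeff_sub, coeff_add, coeff_C_mul, coeff_zero] at hk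
    rw [hXB k, hXA k, hAc k] at hk
    linear_combination hk
  have hne : ∀ k : ℕ, k < m → ((k:ℝ)^2 - (m:ℝ)^2) ≠ 0 := by
    intro k hk
    have h1 : (k:ℝ) < m := by exact_mod_cast hk
    have h2 : (0:ℝ) ≤ k := by positivity
    intro hc; nlinarith
  have key : ∀ j : ℕ, ∀ k, k + j = m → r.coeff k = 0 := by
    intro j
    induction j using Nat.strong_induction_on with
    | _ j ih =>
      intro k hk
      match j, ih with
      | 0, _ => exact hhigh k (by omega)
      | 1, _ =>
        have h2 : r.coeff (k+2) = 0 := hhigh (k+2) (by omega)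
        have hh := hrec k
        rw [h2] at hh
        have hh := hh.symm
        simp at hh
        rcases hh with h' | h'
        · exact absurd h' (hne k (by omega))
        · exact h'
      | (i+2), ih =>
        have h2 : r.coeff (k+2) = 0 := ih i (by omega) (k+2) (by omega)
        have hh := hrec k
        rw [h2] at hh
        have hh := hh.symm
        simp at hh
        rcases hh with h' | h'
        · exact absurd h' (hne k (by omega))
        · exact h'
  ext n
  rcases le_or_gt m n with hn | hn
  · simpa using hhigh n hn
  · simpa using key (m - n) n (by omega)

end Stmt12Aux

open Stmt12Aux

/-- a real polynomial of degree `m ≥ 1` with the equi-oscillation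
property on `[-1,1]` equals the Chebyshev polynomial `T m` of the first kind. -/
theorem stmt12 (m : ℕ) (hm : 1 ≤ m) (p : Polynomial ℝ)
    (hdeg : p.natDegree = m)
    (ζ : ℕ → ℝ) (hζ0 : ζ 0 = -1) (hζm : ζ m = 1)
    (hζmono : ∀ i j, i < j → j ≤ m → ζ i < ζ j)
    (hcrit : ∀ j, 1 ≤ j → j ≤ m - 1 → (derivative p).eval (ζ j) = 0)
    (hvals : ∀ j ≤ m, p.eval (ζ j) = (-1) ^ (m - j)) :
    p = Polynomial.Chebyshev.T ℝ (m : ℤ) := by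
  have hp0 : p ≠ 0 := fun h => by simp [h] at hdeg; omega
  set b := p.leadingCoeff with hbdef
  have hb : b ≠ 0 := leadingCoeff_ne_zero.mpr hp0
  have hζne : ∀ i j, i ≤ m → j ≤ m → i ≠ j → ζ i ≠ ζ j := by
    intro i j hi hj hij
    rcases Nat.lt_or_ge i j with h | h
    · exact ne_of_lt (hζmono i j h hj)
    · exact (ne_of_lt (hζmono j i (by omega) hi)).symm
  set S : ℝ[X] := ∏ j ∈ Finset.Ioo 0 m, (X - C (ζ j)) with hSdef
  have hSm : S.Monic := monic_prod_of_monic _ _ fun j _ => monic_X_sub_C _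
  have hScard : (Finset.Ioo 0 m).card = m - 1 := by rw [Nat.card_Ioo]; omega
  have hSdeg : S.natDegree = m - 1 := by
    rw [hSdef, natDegree_prod _ _ fun j _ => X_sub_C_ne_zero _]
    simp [hScard]
  have hdc : (derivative p).coeff (m-1) = (m:ℝ) * b := by
    rw [coeff_derivative, show m - 1 + 1 = m by omega]
    have h1 : p.coeff m = b := by rw [hbdef, ← hdeg]; rfl
    have h2 : ((m - 1 : ℕ) : ℝ) = (m:ℝ) - 1 := by
      push_cast [Nat.cast_sub hm]; ring
    rw [h1, h2]
    ring
  have hdcne : (derivative p).coeff (m-1) ≠ 0 := by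
    rw [hdc]
    have : (m:ℝ) ≠ 0 := by positivity
    exact mul_ne_zero this hb
  have hpdne : derivative p ≠ 0 := fun h => by simp [h] at hdcne
  have hpddeg : (derivative p).natDegree = m - 1 :=
    le_antisymm (by simpa [hdeg] using natDegree_derivative_le p)
      (le_natDegree_of_ne_zero hdcne)
  have hcop : (↑(Finset.Ioo 0 m) : Set ℕ).Pairwise
      (Function.onFun IsCoprime fun j => (X : ℝ[X]) - C (ζ j)) := by
    intro i hi j hj hij
    simp only [Finset.coe_Ioo, Set.mem_Ioo, Finset.mem_coe, Finset.mem_Ioo] at hi hj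
    exact isCoprime_X_sub_C_of_isUnit_sub
      (sub_ne_zero.mpr (hζne i j (by omega) (by omega) hij)).isUnit
  have hSdvd : S ∣ derivative p := by
    rw [hSdef]
    refine Finset.prod_dvd_of_coprime hcop fun j hj => ?_
    rw [Finset.mem_Ioo] at hj
    exact dvd_iff_isRoot.mpr (hcrit j (by omega) (by omega))
  obtain ⟨u, hu⟩ := hSdvd
  have hune : u ≠ 0 := fun h => hpdne (by rw [hu, h, mul_zero])
  have hudeg : u.natDegree = 0 := by
    have := natDegree_mul (hSm.ne_zero) hune
    rw [← hu, hpddeg, hSdeg] at this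
    omega
  obtain ⟨c, hcu⟩ : ∃ c, u = C c := ⟨u.coeff 0, (Polynomial.eq_C_of_natDegree_eq_zero hudeg)⟩
  have hpd : derivative p = C c * S := by rw [hu, hcu]; ring
  have hc : c = (m:ℝ) * b := by
    have h1 : (derivative p).coeff (m-1) = c * S.coeff (m-1) := by
      rw [hpd, coeff_C_mul]
    rw [hdc, ← hSdeg, ← leadingCoeff, hSm.leadingCoeff, mul_one] at h1
    exact h1.symm
  -- Step 2 : factorization of 1 - p^2
  have hsq : ∀ k : ℕ, ((-1:ℝ)^k)^2 = 1 := fun k => by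
    rw [← pow_mul, mul_comm, pow_mul]; simp
  have hQ0 : (1 - p^2).eval (ζ 0) = 0 := by
    rw [eval_sub, eval_one, eval_pow, hvals 0 (by omega), hsq]; ring
  have hQm : (1 - p^2).eval (ζ m) = 0 := by
    rw [eval_sub, eval_one, eval_pow, hvals m le_rfl, hsq]; ring
  have hQd : ∀ j ∈ Finset.Ioo 0 m, ((X : ℝ[X]) - C (ζ j))^2 ∣ 1 - p^2 := by
    intro j hj
    rw [Finset.mem_Ioo] at hj
    apply doubleDvd
    · rw [eval_sub, eval_one, eval_pow, hvals j (by omega), hsq]; ring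
    · have hder : derivative (1 - p^2 : ℝ[X]) = -(C 2 * p * derivative p) := by
        rw [derivative_sub, derivative_one, derivative_pow]
        simp
      rw [hder]
      simp [hcrit j (by omega) (by omega)]
  have hS2dvd : S^2 ∣ 1 - p^2 := by
    rw [hSdef, ← Finset.prod_pow]
    refine Finset.prod_dvd_of_coprime ?_ hQd
    intro i hi j hj hij
    exact (hcop hi hj hij).pow
  set W : ℝ[X] := (X - C (ζ 0)) * ((X - C (ζ m)) * S^2) with hWdef
  have hcop0m : IsCoprime ((X:ℝ[X]) - C (ζ 0)) (X - C (ζ m)) :=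
    isCoprime_X_sub_C_of_isUnit_sub
      (sub_ne_zero.mpr (hζne 0 m (by omega) le_rfl (by omega))).isUnit
  have hcopS : ∀ i, i ≤ m → (i = 0 ∨ i = m) → IsCoprime ((X:ℝ[X]) - C (ζ i)) (S^2) := by
    intro i hi hcase
    apply IsCoprime.pow_right
    rw [hSdef]
    apply IsCoprime.prod_right
    intro j hj
    rw [Finset.mem_Ioo] at hj
    exact isCoprime_X_sub_C_of_isUnit_sub
      (sub_ne_zero.mpr (hζne i j (by omega) (by omega) (by omega))).isUnit
  have hWdvd : W ∣ 1 - p^2 := by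
    rw [hWdef]
    refine (hcop0m.mul_right (hcopS 0 (by omega) (Or.inl rfl))).mul_dvd
      (dvd_iff_isRoot.mpr hQ0) ?_
    exact (hcopS m le_rfl (Or.inr rfl)).mul_dvd (dvd_iff_isRoot.mpr hQm) hS2dvd
  have hWm : W.Monic := (monic_X_sub_C _).mul ((monic_X_sub_C _).mul (hSm.pow 2))
  have hWdeg : W.natDegree = 2*m := by
    rw [hWdef,
      natDegree_mul (X_sub_C_ne_zero _)
        (mul_ne_zero (X_sub_C_ne_zero _) (pow_ne_zero _ hSm.ne_zero)),
      natDegree_mul (X_sub_C_ne_zero _) (pow_ne_zero _ hSm.ne_zero),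
      natDegree_pow, natDegree_X_sub_C, natDegree_X_sub_C, hSdeg]
    omega
  have hp2deg : (p^2).natDegree = 2*m := by rw [natDegree_pow, hdeg]
  have hQcoeff : (1 - p^2 : ℝ[X]).coeff (2*m) = -b^2 := by
    rw [coeff_sub]
    have h1 : (1:ℝ[X]).coeff (2*m) = 0 := by
      rw [coeff_one, if_neg (by omega)]
    have h2 : (p^2).coeff (2*m) = b^2 := by
      rw [← hp2deg, ← leadingCoeff, leadingCoeff_pow]
    rw [h1, h2]
    ring
  have hQne : (1 - p^2 : ℝ[X]) ≠ 0 := by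
    intro h
    rw [h, coeff_zero] at hQcoeff
    exact hb (pow_eq_zero_iff (n := 2) (by omega) |>.mp (by linarith))
  have hQdeg : (1 - p^2 : ℝ[X]).natDegree = 2*m := by
    refine le_antisymm ?_ (le_natDegree_of_ne_zero (by rw [hQcoeff]; simpa using pow_ne_zero 2 hb))
    refine le_trans (natDegree_sub_le _ _) ?_
    simp [hp2deg]
  obtain ⟨v, hv⟩ := hWdvd
  have hvne : v ≠ 0 := fun h => hQne (by rw [hv, h, mul_zero])
  have hvdeg : v.natDegree = 0 := by
    have := natDegree_mul (hWm.ne_zero) hvne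
    rw [← hv, hQdeg, hWdeg] at this
    omega
  obtain ⟨v0, hv0⟩ : ∃ a, v = C a := ⟨v.coeff 0, (Polynomial.eq_C_of_natDegree_eq_zero hvdeg)⟩
  have hv0val : v0 = -b^2 := by
    have h3 : (1 - p^2 : ℝ[X]).coeff (2*m) = v0 * W.coeff (2*m) := by
      rw [hv, hv0, mul_comm, coeff_C_mul]
    rw [hQcoeff, ← hWdeg, ← leadingCoeff, hWm.leadingCoeff, mul_one] at h3
    exact h3.symm
  have h1p : (1 - p^2 : ℝ[X]) = C (b^2) * ((1 - X^2) * S^2) := by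
    rw [hv, hv0, hv0val, hWdef, hζ0, hζm]
    simp only [map_neg, map_one, map_pow]
    ring
  -- Pell equation
  have hPell : (1 - X^2) * (derivative p)^2 = C ((m:ℝ)^2) * (1 - p^2 : ℝ[X]) := by
    rw [h1p, hpd, hc]
    simp only [map_mul, map_pow]
    ring
  -- ODE for p
  have hfac : (2:ℝ[X]) * derivative p *
      ((1 - X^2) * derivative (derivative p) - X * derivative p + C ((m:ℝ)^2) * p) = 0 := by
    have hder := congrArg derivative hPell
    simp only [derivative_mul, derivative_sub, derivative_one, derivative_pow,
      derivative_X, derivative_C, Nat.cast_ofNat, show (2:ℕ)-1 = 1 from rfl, pow_one,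
      map_ofNat, mul_one, zero_mul, zero_sub, zero_add, mul_zero] at hder
    linear_combination (norm := ring_nf) hder
  have hODEp : (1 - X^2) * derivative (derivative p) - X * derivative p
      + C ((m:ℝ)^2) * p = 0 := by
    rcases mul_eq_zero.mp hfac with h | h
    · rcases mul_eq_zero.mp h with h2 | h2
      · exact absurd h2 two_ne_zero
      · exact absurd h2 hpdne
    · exact h
  -- combine with Chebyshev ODE
  have hTaux := Taux m
  set Tm : ℝ[X] := Polynomial.Chebyshev.T ℝ (m:ℤ) with hTm
  have h2ne : (2:ℝ)^(m-1) ≠ 0 := by positivity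
  set α : ℝ := b / 2^(m-1) with hα
  set r : ℝ[X] := p - C α * Tm with hr
  have hODET := TODE m
  have hODEr : (1 - X^2) * derivative (derivative r) - X * derivative r
      + C ((m:ℝ)^2) * r = 0 := by
    have d1 : derivative r = derivative p - C α * derivative Tm := by
      rw [hr, derivative_sub, derivative_mul, derivative_C]
      ring
    have d2 : derivative (derivative r)
        = derivative (derivative p) - C α * derivative (derivative Tm) := by
      rw [d1, derivative_sub, derivative_mul, derivative_C]
      ring
    rw [d2, d1, hr]
    linear_combination hODEp - C α * hODET
  have hhigh : ∀ k, m ≤ k → r.coeff k = 0 := by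
    intro k hk
    rw [hr, coeff_sub, coeff_C_mul]
    rcases eq_or_lt_of_le hk with heq | hlt
    · rw [← heq]
      have h1 : p.coeff m = b := by rw [hbdef, ← hdeg]; rfl
      rw [h1, hTaux.2, hα]
      field_simp
      ring
    · rw [coeff_eq_zero_of_natDegree_lt (by rw [hdeg]; omega),
        coeff_eq_zero_of_natDegree_lt (lt_of_le_of_lt hTaux.1 hlt)]
      ring
  have hr0 : r = 0 := odeUnique m r hODEr hhigh
  have hpT : p = C α * Tm := by rwa [hr, sub_eq_zero] at hr0
  have hone : p.eval 1 = 1 := by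
    have h4 := hvals m le_rfl
    rw [hζm] at h4
    simpa using h4
  have hTone : Tm.eval 1 = 1 := Teval1 _
  have hα1 : α = 1 := by
    have h5 := congrArg (eval 1) hpT
    rw [hone, eval_mul, eval_C, hTone, mul_one] at h5
    exact h5.symm
  rw [hpT, hα1, map_one, one_mul]
end

section
/- Let m ≥ 2, let z_j = cos((m−j)π/m) for j = 1,...,m−1 be the critical points of T_m in (−1,1), and set z_0 = −1. Then ∏_{i=1}^{m−1}(z_0 − z_i) = m(−1)^{m−1}/2^{m−1}, and for 1 ≤ k ≤ m−1, ∏_{i≠k, 0≤i≤m−1}(z_k − z_i) = m(−1)^{m−1−k}/(2^{m−1}(1 − z_k)). -/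
open Polynomial Polynomial.Chebyshev Finset Real

lemma U_eval_neg_one : ∀ n : ℕ, (U ℝ (n : ℤ)).eval (-1) = (-1) ^ n * (n + 1)
  | 0 => by simp
  | 1 => by norm_num [U_one]
  | (n + 2) => by
      have h1 := U_eval_neg_one n
      have h2 := U_eval_neg_one (n + 1)
      have h3 := U_add_two ℝ (n : ℤ)
      push_cast
      push_cast at h2
      rw [h3]
      simp only [eval_sub, eval_mul, eval_ofNat, eval_X, h1, h2]
      ring

lemma U_deg : ∀ n : ℕ, (U ℝ (n : ℤ)).natDegree ≤ n ∧ (U ℝ (n : ℤ)).coeff n = 2 ^ n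
  | 0 => by simp
  | 1 => by
      constructor
      · simpa [U_one] using natDegree_C_mul_le (2:ℝ) X
      · simp [U_one, coeff_X]
  | (n + 2) => by
      obtain ⟨d1, c1⟩ := U_deg n
      obtain ⟨d2, c2⟩ := U_deg (n + 1)
      have h3 := U_add_two ℝ (n : ℤ)
      have h2X : (2 * X : ℝ[X]) = C 2 * X := by norm_cast
      constructor
      · push_cast
        rw [h3]
        refine (natDegree_sub_le _ _).trans (max_le ?_ (d1.trans (by omega)))
        calc (2 * X * U ℝ ((n:ℤ)+1)).natDegree ≤ (2*X : ℝ[X]).natDegree + (U ℝ ((n:ℤ)+1)).natDegree := natDegree_mul_le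
          _ ≤ 1 + (n+1) := by
              gcongr
              · rw [h2X]; exact (natDegree_C_mul_le _ _).trans (by simp)
              · exact_mod_cast d2
          _ = n + 2 := by ring
      · push_cast
        rw [h3]
        rw [coeff_sub, h2X, mul_assoc, coeff_C_mul, coeff_X_mul]
        push_cast at c2
        rw [c2, coeff_eq_zero_of_natDegree_lt (by omega : (U ℝ (n:ℤ)).natDegree < n + 2)]
        ring

/-- with `z j = cos((m-j)π/m)` (so `z 0 = -1`), the critical
points of `T m`, one has `∏_{i=1}^{m-1} (z 0 - z i) = m (-1)^{m-1} / 2^{m-1}`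
and, for `1 ≤ k ≤ m-1`,
`∏_{i≠k, 0 ≤ i ≤ m-1} (z k - z i) = m (-1)^{m-1-k} / (2^{m-1} (1 - z k))`. -/
theorem stmt14 (m : ℕ) (hm : 2 ≤ m)
    (z : ℕ → ℝ) (hz : ∀ j, z j = Real.cos (((m : ℝ) - j) * π / m)) :
    (∏ i ∈ Ico 1 m, (z 0 - z i) = m * (-1) ^ (m - 1) / 2 ^ (m - 1)) ∧
    (∀ k, 1 ≤ k → k ≤ m - 1 →
      ∏ i ∈ (range m).erase k, (z k - z i)
        = m * (-1) ^ (m - 1 - k) / (2 ^ (m - 1) * (1 - z k))) := by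
  have hπ := pi_pos
  have hm0 : (0:ℝ) < m := by exact_mod_cast (by omega : 0 < m)
  have hm0' : (m:ℝ) ≠ 0 := ne_of_gt hm0
  -- θ values
  have htheta : ∀ i : ℕ, i ≤ m → ((m:ℝ) - i) * π / m ∈ Set.Icc 0 π := by
    intro i hi
    have him : (i:ℝ) ≤ m := by exact_mod_cast hi
    constructor
    · exact div_nonneg (mul_nonneg (by linarith) hπ.le) hm0.le
    · rw [div_le_iff₀ hm0]
      have h0 : (0:ℝ) ≤ i := Nat.cast_nonneg i
      nlinarith
  have hmono : ∀ i j : ℕ, i < j → j ≤ m → z i < z j := by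
    intro i j hij hjm
    rw [hz i, hz j]
    apply Real.strictAntiOn_cos (htheta j hjm) (htheta i (by omega))
    have : (i:ℝ) < j := by exact_mod_cast hij
    rw [div_lt_div_iff₀ hm0 hm0]
    nlinarith [mul_pos (sub_pos.mpr this) (mul_pos hπ hm0)]
  have hz0 : z 0 = -1 := by
    rw [hz]
    have : ((m:ℝ) - (0:ℕ)) * π / m = π := by push_cast; field_simp; ring
    rw [this, Real.cos_pi]
  have hzm : z m = 1 := by rw [hz]; simp
  -- trig facts at interior nodes
  have key : ∀ i : ℕ, 1 ≤ i → i ≤ m - 1 →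
      (U ℝ ((m:ℤ) - 1)).eval (z i) = 0 ∧
      (T ℝ (m:ℤ)).eval (z i) = (-1) ^ (m - i) ∧
      (U ℝ ((m:ℤ) - 2)).eval (z i) = -(-1) ^ (m - i) := by
    intro i h1 h2
    set θ : ℝ := ((m:ℝ) - i) * π / m with hθ
    have hzi : z i = Real.cos θ := hz i
    have hθ0 : 0 < θ := by
      apply div_pos (mul_pos _ hπ) hm0
      have : (i:ℝ) < m := by exact_mod_cast (by omega : i < m)
      linarith
    have hθπ : θ < π := by
      rw [hθ, div_lt_iff₀ hm0]
      have h0 : (1:ℝ) ≤ i := by exact_mod_cast h1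
      nlinarith
    have hsin : 0 < Real.sin θ := Real.sin_pos_of_pos_of_lt_pi hθ0 hθπ
    have hcast : ((m - i : ℕ):ℝ) = (m:ℝ) - i := by
      push_cast [Nat.cast_sub (by omega : i ≤ m)]; ring
    have hmθ : (m:ℝ) * θ = ((m - i : ℕ):ℝ) * π := by
      rw [hθ, hcast]; field_simp
    have hU1 : (U ℝ ((m:ℤ) - 1)).eval (z i) = 0 := by
      have h := U_real_cos θ ((m:ℤ) - 1)
      rw [← hzi] at h
      push_cast at h
      rw [show ((m:ℝ) - 1 + 1) * θ = ((m - i : ℕ):ℝ) * π by rw [← hmθ]; ring,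
        Real.sin_nat_mul_pi] at h
      exact (mul_eq_zero.mp h).resolve_right hsin.ne'
    refine ⟨hU1, ?_, ?_⟩
    · have h := T_real_cos θ (m:ℤ)
      rw [← hzi] at h
      rw [h]
      push_cast
      rw [show (m:ℝ) * θ = ((m - i : ℕ):ℝ) * π - 0 by rw [sub_zero, hmθ],
        Real.cos_nat_mul_pi_sub, Real.cos_zero, mul_one]
    · have h := U_real_cos θ ((m:ℤ) - 2)
      rw [← hzi] at h
      push_cast at h
      rw [show ((m:ℝ) - 2 + 1) * θ = ((m - i : ℕ):ℝ) * π - θ by rw [← hmθ]; ring,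
        Real.sin_nat_mul_pi_sub] at h
      have := mul_right_cancel₀ hsin.ne' (h.trans (by ring : -((-1:ℝ) ^ (m - i) * Real.sin θ) = (-(-1:ℝ) ^ (m - i)) * Real.sin θ))
      exact this
  set a : ℝ := 2 ^ (m - 1) with ha
  have ha0 : a ≠ 0 := by positivity
  set N : ℝ[X] := Lagrange.nodal (Ico 1 m) z with hN
  have hinj : Set.InjOn z (Ico 1 m : Finset ℕ) := by
    intro i hi j hj hij
    simp only [coe_Ico, Set.mem_Ico] at hi hj
    by_contra hne
    rcases lt_or_gt_of_ne hne with h | h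
    · exact absurd hij (hmono i j h (by omega)).ne
    · exact absurd hij.symm (hmono j i h (by omega)).ne
  have hcastm : ((m - 1 : ℕ) : ℤ) = (m:ℤ) - 1 := by
    push_cast [Nat.cast_sub (by omega : 1 ≤ m)]; ring
  have hNdeg : N.natDegree = m - 1 := by
    rw [hN, Lagrange.natDegree_nodal, Nat.card_Ico]
  have hNcoeff : N.coeff (m - 1) = 1 := by
    have hmon := Lagrange.nodal_monic (s := Ico 1 m) (v := z)
    rw [Monic.def, Polynomial.leadingCoeff, hNdeg] at hmon
    exact hmon
  have hfact : U ℝ ((m:ℤ) - 1) = C a * N := by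
    rw [← sub_eq_zero]
    set d : ℝ[X] := U ℝ ((m:ℤ) - 1) - C a * N with hd
    by_contra hd0
    obtain ⟨du, cu⟩ := U_deg (m - 1)
    rw [hcastm] at du cu
    have hdle : d.natDegree ≤ m - 1 :=
      (natDegree_sub_le _ _).trans (max_le du ((natDegree_C_mul_le _ _).trans hNdeg.le))
    have hcoeff : d.coeff (m - 1) = 0 := by
      rw [hd, coeff_sub, cu, coeff_C_mul, hNcoeff, ha]; ring
    have hdlt : d.natDegree < m - 1 := by
      rcases lt_or_eq_of_le hdle with h | h
      · exact h
      · exact absurd (h ▸ hcoeff) (by simpa [Polynomial.leadingCoeff, h] using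
          Polynomial.leadingCoeff_ne_zero.mpr hd0)
    have : d = 0 := by
      apply Polynomial.eq_zero_of_natDegree_lt_card_of_eval_eq_zero' d ((Ico 1 m).image z)
      · intro x hx
        obtain ⟨i, hi, rfl⟩ := Finset.mem_image.mp hx
        rw [Finset.mem_Ico] at hi
        rw [hd, eval_sub, eval_mul, eval_C,
          (key i hi.1 (by omega)).1, hN, Lagrange.eval_nodal_at_node (by rw [Finset.mem_Ico]; omega)]
        ring
      · rwa [Finset.card_image_of_injOn hinj, Nat.card_Ico]
    exact hd0 this
  have hU0 : (U ℝ ((m:ℤ) - 1)).eval (z 0) = (-1) ^ (m - 1) * m := by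
    rw [hz0, ← hcastm, U_eval_neg_one (m - 1)]
    congr 1
    push_cast [Nat.cast_sub (by omega : 1 ≤ m)]; ring
  constructor
  · have h1 : ∏ i ∈ Ico 1 m, (z 0 - z i) = N.eval (z 0) := by
      rw [hN, Lagrange.eval_nodal]
    have h2 : (U ℝ ((m:ℤ) - 1)).eval (z 0) = a * N.eval (z 0) := by
      rw [hfact, eval_mul, eval_C]
    rw [hU0] at h2
    rw [h1]
    field_simp
    linarith [h2]
  · intro k hk1 hk2
    obtain ⟨hUk, hTk, hU2k⟩ := key k hk1 hk2
    have hkm : k < m := by omega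
    have hzk1 : z k < 1 := by rw [← hzm]; exact hmono k m hkm le_rfl
    have hzk0 : -1 < z k := by rw [← hz0]; exact hmono 0 k hk1 hkm.le
    have hkmem : k ∈ Ico 1 m := by rw [Finset.mem_Ico]; omega
    set P : ℝ[X] := Lagrange.nodal (range m) z with hPdef
    have hrange : range m = insert 0 (Ico 1 m) := by
      ext x; simp only [Finset.mem_range, Finset.mem_insert, Finset.mem_Ico]; omega
    have hP : P = (X - C (z 0)) * N := by
      rw [hPdef, hrange, Lagrange.nodal_insert_eq_nodal (by simp), hN]
    have e1 : ∏ i ∈ (range m).erase k, (z k - z i)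
        = (derivative P).eval (z k) := by
      rw [Lagrange.eval_nodal_derivative_eval_node_eq (Finset.mem_range.mpr hkm),
        Lagrange.eval_nodal]
    have hNk : N.eval (z k) = 0 := Lagrange.eval_nodal_at_node hkmem
    have e2 : (derivative P).eval (z k) = (z k + 1) * (derivative N).eval (z k) := by
      rw [hP, derivative_mul]
      simp [hNk, hz0]
    have e3 : (derivative (U ℝ ((m:ℤ) - 1))).eval (z k) = a * (derivative N).eval (z k) := by
      rw [hfact, derivative_mul, derivative_C]
      simp
    -- ODE computation
    have hODE := Polynomial.Chebyshev.one_sub_X_sq_mul_derivative_T_eq_poly_in_T (R := ℝ) ((m:ℤ) - 1)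
    rw [show (m:ℤ) - 1 + 1 = (m:ℤ) by ring] at hODE
    have hD := congr_arg (fun p => (derivative p).eval (z k)) hODE
    simp only [derivative_mul, derivative_sub, derivative_add, derivative_one, derivative_X,
      Polynomial.derivative_X_pow, Polynomial.derivative_intCast,
      T_derivative_eq_U, eval_mul, eval_sub, eval_add, eval_one, eval_pow, eval_X, eval_C,
      Polynomial.eval_intCast, eval_zero, hUk, hTk] at hD
    rw [show (m:ℤ) - 1 - 1 = (m:ℤ) - 2 by ring] at hD
    rw [hU2k, e3] at hD
    push_cast at hD
    have hsign : ((-1:ℝ)) ^ (m - k) = -(-1) ^ (m - 1 - k) := by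
      rw [show m - k = (m - 1 - k) + 1 from by omega, pow_succ]; ring
    rw [hsign] at hD
    have h' : (m:ℝ) * ((1 - z k ^ 2) * (a * (derivative N).eval (z k)))
        = (m:ℝ) * ((m:ℝ) * (-1) ^ (m - 1 - k)) := by linear_combination hD
    have hkey := mul_left_cancel₀ hm0' h'
    rw [e1, e2]
    rw [eq_div_iff (mul_ne_zero ha0 (by linarith : (1 - z k : ℝ) ≠ 0))]
    linear_combination hkey
end

section
/- Let γ > 1, m ≥ 2, β = β(m,γ) > 0 the solution of cosh((2m−1)β)/cosh β = γ, and K = 1/(2 sinh² β). Then 2(m−1)²/(cosh^{−1}γ)² − 1 ≤ K ≤ 2m²/(cosh^{−1}γ)². Consequently lim_{m→∞} K(m,γ)/m² = 2/(cosh^{−1}γ)². -/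
open Filter

lemma aux_sinh_le_mul_cosh {x : ℝ} (hx : 0 ≤ x) : Real.sinh x ≤ x * Real.cosh x := by
  have hmono : MonotoneOn (fun y => y * Real.cosh y - Real.sinh y) (Set.Ici (0:ℝ)) := by
    have hd : ∀ y : ℝ, HasDerivAt (fun y => y * Real.cosh y - Real.sinh y)
        (y * Real.sinh y) y := by
      intro y
      have h1 := ((hasDerivAt_id y).mul (Real.hasDerivAt_cosh y)).sub (Real.hasDerivAt_sinh y)
      refine h1.congr_deriv ?_
      simp only [id_eq]
      ring
    apply monotoneOn_of_deriv_nonneg (convex_Ici 0)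
    · exact ((continuous_id.mul Real.continuous_cosh).sub Real.continuous_sinh).continuousOn
    · intro y _
      exact (hd y).differentiableAt.differentiableWithinAt
    · intro y hy
      rw [interior_Ici, Set.mem_Ioi] at hy
      rw [(hd y).deriv]
      have : 0 ≤ Real.sinh y := by
        rw [Real.sinh_nonneg_iff]; exact hy.le
      positivity
  have h0 := hmono (Set.self_mem_Ici) hx hx
  simp only [Real.sinh_zero, Real.cosh_zero, mul_one, zero_mul, sub_zero] at h0
  linarith

set_option maxHeartbeats 1000000 in
/-- with `β = β(m,γ) > 0` the solution of
`cosh((2m-1)β)/cosh β = γ` and `K = 1/(2 sinh² β)`, one has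
`2(m-1)²/A² - 1 ≤ K ≤ 2m²/A²` where `A = cosh⁻¹ γ`; consequently
`K(m,γ)/m² → 2/A²` as `m → ∞`. -/
theorem stmt16 (γ : ℝ) (hγ : 1 < γ)
    (A : ℝ) (hA : 0 ≤ A) (hAγ : Real.cosh A = γ)
    (β : ℕ → ℝ) (hβpos : ∀ m, 2 ≤ m → 0 < β m)
    (hβγ : ∀ m, 2 ≤ m → Real.cosh ((2 * m - 1) * β m) / Real.cosh (β m) = γ)
    (K : ℕ → ℝ) (hK : ∀ m, K m = 1 / (2 * Real.sinh (β m) ^ 2)) :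
    (∀ m : ℕ, 2 ≤ m →
      2 * ((m : ℝ) - 1) ^ 2 / A ^ 2 - 1 ≤ K m ∧ K m ≤ 2 * (m : ℝ) ^ 2 / A ^ 2) ∧
    Tendsto (fun m : ℕ => K m / (m : ℝ) ^ 2) atTop (nhds (2 / A ^ 2)) := by
  have hA0 : 0 < A := by
    rcases hA.lt_or_eq with h | h
    · exact h
    · exfalso; rw [← h, Real.cosh_zero] at hAγ; linarith
  have main : ∀ m : ℕ, 2 ≤ m →
      2 * ((m : ℝ) - 1) ^ 2 / A ^ 2 - 1 ≤ K m ∧ K m ≤ 2 * (m : ℝ) ^ 2 / A ^ 2 := by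
    intro m hm
    have hM : (2:ℝ) ≤ (m:ℝ) := by exact_mod_cast hm
    set M : ℝ := (m:ℝ)
    set b : ℝ := β m with hbdef
    have hb : 0 < b := hβpos m hm
    have hs : 0 < Real.sinh b := Real.sinh_pos_iff.2 hb
    set s : ℝ := Real.sinh b with hsdef
    have hcb : 0 < Real.cosh b := Real.cosh_pos b
    have heq : Real.cosh ((2 * M - 1) * b) = γ * Real.cosh b := by
      have := hβγ m hm
      rw [div_eq_iff (ne_of_gt hcb)] at this
      exact this
    -- lower bound on b : A ≤ 2 M b
    have hlow : A ≤ 2 * M * b := by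
      have h1 : Real.cosh A ≤ Real.cosh ((2 * M - 1) * b) := by
        rw [heq, ← hAγ]
        nlinarith [Real.one_le_cosh b, Real.cosh_pos (x := A), hγ, hAγ]
      have h2 : A ≤ (2 * M - 1) * b := by
        have := Real.cosh_le_cosh.1 h1
        rwa [abs_of_nonneg hA, abs_of_nonneg (by nlinarith)] at this
      nlinarith
    -- upper bound on b : (2M - 2) b ≤ A
    have hup : (2 * M - 2) * b ≤ A := by
      have h1 : Real.cosh ((2 * M - 1) * b) ≤ Real.cosh (A + b) := by
        rw [heq, ← hAγ, Real.cosh_add]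
        have hsA : 0 ≤ Real.sinh A := Real.sinh_nonneg_iff.2 hA0.le
        nlinarith
      have h2 : (2 * M - 1) * b ≤ A + b := by
        have := Real.cosh_le_cosh.1 h1
        rwa [abs_of_nonneg (by nlinarith), abs_of_nonneg (by nlinarith)] at this
      linarith
    have hbs : b ≤ s := (Real.self_le_sinh_iff.2 hb.le)
    have hscb : s ≤ b * Real.cosh b := aux_sinh_le_mul_cosh hb.le
    have hcoshsq : Real.cosh b ^ 2 = 1 + s ^ 2 := by
      rw [Real.cosh_sq']
    have hKm : K m = 1 / (2 * s ^ 2) := hK m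
    constructor
    · -- lower bound
      rw [hKm, div_sub_one (by positivity : (A:ℝ)^2 ≠ 0), div_le_div_iff₀ (by positivity) (by positivity)]
      -- (2(M-1)^2 - A^2) * (2 s^2) ≤ 1 * A^2, i.e. 4(M-1)^2 s^2 ≤ A^2 + 2 A^2 s^2
      have key : s ^ 2 ≤ b ^ 2 * (1 + s ^ 2) := by
        have k1 : s * s ≤ (b * Real.cosh b) * (b * Real.cosh b) :=
          mul_self_le_mul_self hs.le hscb
        have k2 : (b * Real.cosh b) * (b * Real.cosh b) = b ^ 2 * (1 + s ^ 2) := by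
          rw [← hcoshsq]; ring
        nlinarith [k1, k2]
      have hsq' : ((2 * M - 2) * b) * ((2 * M - 2) * b) ≤ A * A :=
        mul_self_le_mul_self (by nlinarith) hup
      have h3 : (2 * M - 2) * b * ((2 * M - 2) * b) * (1 + s ^ 2) ≤ A * A * (1 + s ^ 2) :=
        mul_le_mul_of_nonneg_right hsq' (by positivity)
      have h4 : 4 * (M - 1) ^ 2 * s ^ 2 ≤ 4 * (M - 1) ^ 2 * (b ^ 2 * (1 + s ^ 2)) :=
        mul_le_mul_of_nonneg_left key (by positivity)
      nlinarith [h3, h4, sq_nonneg (A * s)]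
    · -- upper bound
      rw [hKm, div_le_div_iff₀ (by positivity) (by positivity)]
      have h1 : A ≤ 2 * M * s := by nlinarith
      have h2 : A * A ≤ (2 * M * s) * (2 * M * s) := mul_self_le_mul_self hA0.le h1
      nlinarith [h2]
  refine ⟨main, ?_⟩
  have h0 : Tendsto (fun m : ℕ => 1 / (m:ℝ)) atTop (nhds 0) :=
    tendsto_one_div_atTop_nhds_zero_nat
  have hL : Tendsto (fun m : ℕ => (2 * ((m:ℝ) - 1) ^ 2 / A ^ 2 - 1) / (m:ℝ) ^ 2)
      atTop (nhds (2 / A ^ 2)) := by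
    have h1 : Tendsto (fun m : ℕ => 2 / A ^ 2 * (1 - 1/(m:ℝ)) ^ 2 - (1/(m:ℝ)) ^ 2)
        atTop (nhds (2 / A ^ 2 * (1 - 0) ^ 2 - 0 ^ 2)) := by
      exact ((tendsto_const_nhds.mul (((tendsto_const_nhds.sub h0)).pow 2)).sub (h0.pow 2))
    have h2 : (2:ℝ) / A ^ 2 * (1 - 0) ^ 2 - 0 ^ 2 = 2 / A ^ 2 := by ring
    rw [h2] at h1
    apply h1.congr'
    filter_upwards [eventually_ge_atTop 1] with m hm
    have hm0 : (m:ℝ) ≠ 0 := by positivity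
    field_simp
  have hU : Tendsto (fun m : ℕ => (2 * (m:ℝ) ^ 2 / A ^ 2) / (m:ℝ) ^ 2)
      atTop (nhds (2 / A ^ 2)) := by
    apply tendsto_const_nhds.congr'
    filter_upwards [eventually_ge_atTop 1] with m hm
    have hm0 : (m:ℝ) ≠ 0 := by positivity
    field_simp
  refine tendsto_of_tendsto_of_tendsto_of_le_of_le' hL hU ?_ ?_
  · filter_upwards [eventually_ge_atTop 2] with m hm
    have h := (main m hm).1
    gcongr
  · filter_upwards [eventually_ge_atTop 2] with m hm
    have h := (main m hm).2
    gcongr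
end

section
/- Let γ > 1, σ = π²/(cosh^{−1}γ)², and for m ≥ 2 let x_j^{(m)} = 1 + 2K(m,γ) sin²(jπ/(2m)) for 1 ≤ j ≤ m−1, where K(m,γ) ≤ 2m²/(cosh^{−1}γ)². Then for all m and all 1 ≤ j ≤ m−1, x_j^{(m)} ≤ 1 + σ j², and for each fixed j ≥ 1, lim_{m→∞} x_j^{(m)} = 1 + σ j². -/
open Filter Real Topology

set_option maxHeartbeats 1000000

/-- with `σ = π²/A²` (`A = cosh⁻¹ γ`) and
`x_j^{(m)} = 1 + 2 K(m,γ) sin²(jπ/(2m))` where `K(m,γ) = 1/(2 sinh² β(m,γ))`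
and `β(m,γ)` solves `cosh((2m-1)β)/cosh β = γ`: for all `m ≥ 2` and
`1 ≤ j ≤ m-1`, `x_j^{(m)} ≤ 1 + σ j²`, and for each fixed `j ≥ 1`,
`x_j^{(m)} → 1 + σ j²` as `m → ∞`. -/
theorem stmt17 (γ : ℝ) (hγ : 1 < γ)
    (A : ℝ) (hA : 0 ≤ A) (hAγ : Real.cosh A = γ)
    (σ : ℝ) (hσ : σ = π ^ 2 / A ^ 2)
    (β : ℕ → ℝ) (hβpos : ∀ m : ℕ, 2 ≤ m → 0 < β m)
    (hβγ : ∀ m : ℕ, 2 ≤ m → Real.cosh ((2 * m - 1) * β m) / Real.cosh (β m) = γ)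
    (K : ℕ → ℝ) (hK : ∀ m, K m = 1 / (2 * Real.sinh (β m) ^ 2))
    (x : ℕ → ℕ → ℝ)
    (hx : ∀ m j, x m j = 1 + 2 * K m * Real.sin (j * π / (2 * m)) ^ 2) :
    (∀ m : ℕ, 2 ≤ m → ∀ j : ℕ, 1 ≤ j → j ≤ m - 1 → x m j ≤ 1 + σ * j ^ 2) ∧
    (∀ j : ℕ, 1 ≤ j →
      Tendsto (fun m : ℕ => x m j) atTop (nhds (1 + σ * j ^ 2))) := by
  have hA0 : 0 < A := by
    rcases hA.lt_or_eq with h | h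
    · exact h
    · exfalso; rw [← h, Real.cosh_zero] at hAγ; linarith
  have hγ0 : (0:ℝ) < γ := by linarith
  -- key bounds on β
  have hmain : ∀ m : ℕ, 2 ≤ m →
      A ≤ (2*(m:ℝ)-1) * β m ∧ (2*(m:ℝ)-2) * β m ≤ A := by
    intro m hm
    have hb : 0 < β m := hβpos m hm
    have hm2 : (2:ℝ) ≤ (m:ℝ) := by exact_mod_cast hm
    have hcb : (0:ℝ) < Real.cosh (β m) := Real.cosh_pos _
    have h1 : Real.cosh ((2*(m:ℝ)-1) * β m) = γ * Real.cosh (β m) :=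
      (div_eq_iff hcb.ne').mp (hβγ m hm)
    have h2m1 : 0 ≤ (2*(m:ℝ)-1) * β m := by nlinarith
    have k1 : A ≤ (2*(m:ℝ)-1) * β m := by
      have hcoshA : Real.cosh A ≤ Real.cosh ((2*(m:ℝ)-1) * β m) := by
        rw [hAγ, h1]
        nlinarith [Real.one_le_cosh (β m)]
      have := Real.cosh_le_cosh.mp hcoshA
      rwa [abs_of_nonneg hA, abs_of_nonneg h2m1] at this
    have hsA : 0 ≤ Real.sinh A := (Real.sinh_pos_iff.mpr hA0).le
    have hsb : 0 ≤ Real.sinh (β m) := (Real.sinh_pos_iff.mpr hb).le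
    have hadd : Real.cosh ((2*(m:ℝ)-1) * β m) ≤ Real.cosh (A + β m) := by
      rw [Real.cosh_add, h1, ← hAγ]
      nlinarith [mul_nonneg hsA hsb]
    have := Real.cosh_le_cosh.mp hadd
    rw [abs_of_nonneg h2m1, abs_of_nonneg (by positivity : (0:ℝ) ≤ A + β m)] at this
    exact ⟨k1, by nlinarith⟩
  constructor
  · -- part 1: the bound
    intro m hm j hj1 hj2
    have hb : 0 < β m := hβpos m hm
    have hs : 0 < Real.sinh (β m) := Real.sinh_pos_iff.mpr hb
    have hm2 : (2:ℝ) ≤ (m:ℝ) := by exact_mod_cast hm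
    have hj1' : (1:ℝ) ≤ (j:ℝ) := by exact_mod_cast hj1
    have hjm : (j:ℝ) ≤ (m:ℝ) - 1 := by
      have h : (j:ℝ) ≤ ((m - 1 : ℕ):ℝ) := by exact_mod_cast hj2
      rwa [Nat.cast_sub (by omega), Nat.cast_one] at h
    set t : ℝ := (j:ℝ) * π / (2 * m) with ht
    have hπ := Real.pi_pos
    have ht0 : 0 ≤ t := by positivity
    have htpi : t ≤ π := by
      rw [ht, div_le_iff₀ (by positivity)]
      nlinarith
    have hsin0 : 0 ≤ Real.sin t := Real.sin_nonneg_of_nonneg_of_le_pi ht0 htpi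
    have hsint : Real.sin t ≤ t := Real.sin_le ht0
    have hAle : A ≤ 2*(m:ℝ) * Real.sinh (β m) := by
      have k1 := (hmain m hm).1
      have hss := Real.self_le_sinh_iff.mpr hb.le
      nlinarith
    have hm0 : (m:ℝ) ≠ 0 := by positivity
    have h2m : t * (2*(m:ℝ)) = (j:ℝ) * π := by
      rw [ht]; field_simp
    have hineq : Real.sin t ^ 2 * A ^ 2 ≤ π ^ 2 * (j:ℝ)^2 * Real.sinh (β m) ^ 2 := by
      have hmm := mul_le_mul hsint hAle hA (by positivity)
      have e2 : t * (2*(m:ℝ)*Real.sinh (β m)) = (j:ℝ)*π*Real.sinh (β m) := by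
        rw [← h2m]; ring
      rw [e2] at hmm
      have hsq := pow_le_pow_left₀ (mul_nonneg hsin0 hA) hmm 2
      nlinarith [hsq]
    rw [hx, hK]
    have e : 2 * (1/(2 * Real.sinh (β m) ^ 2)) * Real.sin t ^ 2
        = Real.sin t ^ 2 / Real.sinh (β m) ^ 2 := by field_simp
    rw [e]
    have : Real.sin t ^ 2 / Real.sinh (β m) ^ 2 ≤ π ^ 2 * (j:ℝ)^2 / A ^ 2 := by
      rw [div_le_div_iff₀ (by positivity) (by positivity)]
      linarith
    rw [hσ]
    have e3 : π ^ 2 / A ^ 2 * (j:ℝ) ^ 2 = π ^ 2 * (j:ℝ)^2 / A ^ 2 := by ring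
    rw [e3]; linarith [this]
  · -- part 2: the limit
    intro j hj
    have hπ := Real.pi_pos
    have hj1' : (1:ℝ) ≤ (j:ℝ) := by exact_mod_cast hj
    have hc0 : (0:ℝ) < (j:ℝ) * π := by positivity
    set c : ℝ := (j:ℝ) * π with hc
    -- β m → 0
    have htop : Tendsto (fun m : ℕ => 2*(m:ℝ)-2) atTop atTop :=
      tendsto_atTop_add_const_right _ _ (Tendsto.const_mul_atTop two_pos tendsto_natCast_atTop_atTop)
    have hβ0 : Tendsto β atTop (𝓝 0) := by
      apply squeeze_zero' (g := fun m : ℕ => A / (2*(m:ℝ)-2))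
      · filter_upwards [eventually_ge_atTop 2] with m hm using (hβpos m hm).le
      · filter_upwards [eventually_ge_atTop 2] with m hm
        have hm2 : (2:ℝ) ≤ (m:ℝ) := by exact_mod_cast hm
        have := (hmain m hm).2
        rw [le_div_iff₀ (by linarith)]
        linarith [mul_comm (β m) (2*(m:ℝ)-2)]
      · have := htop.inv_tendsto_atTop.const_mul A
        simpa [div_eq_mul_inv] using this
    -- 2 m β m → A
    have h2mβ : Tendsto (fun m : ℕ => 2*(m:ℝ) * β m) atTop (𝓝 A) := by
      have hup : Tendsto (fun m : ℕ => A + A * (2*(m:ℝ)-2)⁻¹ * 2) atTop (𝓝 A) := by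
        have h0 := (htop.inv_tendsto_atTop.const_mul A).mul_const (2:ℝ)
        have := tendsto_const_nhds.add (f := fun _ : ℕ => A) h0
        simpa using this
      apply tendsto_of_tendsto_of_tendsto_of_le_of_le' tendsto_const_nhds hup
      · filter_upwards [eventually_ge_atTop 2] with m hm
        have hb := hβpos m hm
        have hm2 : (2:ℝ) ≤ (m:ℝ) := by exact_mod_cast hm
        have k1 := (hmain m hm).1
        nlinarith
      · filter_upwards [eventually_ge_atTop 2] with m hm
        have hb := hβpos m hm
        have hm2 : (2:ℝ) ≤ (m:ℝ) := by exact_mod_cast hm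
        have k2 := (hmain m hm).2
        have hβle : β m ≤ A * (2*(m:ℝ)-2)⁻¹ := by
          rw [← div_eq_mul_inv, le_div_iff₀ (by linarith : (0:ℝ) < 2*(m:ℝ)-2)]
          nlinarith
        nlinarith
    -- c/(2 m β m) → c/A
    have hratio : Tendsto (fun m : ℕ => c / (2*(m:ℝ) * β m)) atTop (𝓝 (c / A)) :=
      tendsto_const_nhds.div h2mβ hA0.ne'
    -- sin(u)/u → 1 where u = c/(2m)
    have hu : Tendsto (fun m : ℕ => c / (2*(m:ℝ))) atTop (𝓝 0) := by
      have h2 : Tendsto (fun m : ℕ => 2*(m:ℝ)) atTop atTop :=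
        Tendsto.const_mul_atTop two_pos tendsto_natCast_atTop_atTop
      simpa [div_eq_mul_inv] using h2.inv_tendsto_atTop.const_mul c
    have hu' : Tendsto (fun m : ℕ => c / (2*(m:ℝ))) atTop (𝓝[≠] 0) := by
      rw [tendsto_nhdsWithin_iff]
      refine ⟨hu, ?_⟩
      filter_upwards [eventually_ge_atTop 1] with m hm
      have hm1 : (1:ℝ) ≤ (m:ℝ) := by exact_mod_cast hm
      have : (0:ℝ) < c / (2*(m:ℝ)) := by positivity
      simp [this.ne']
    have hβ0' : Tendsto β atTop (𝓝[≠] 0) := by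
      rw [tendsto_nhdsWithin_iff]
      refine ⟨hβ0, ?_⟩
      filter_upwards [eventually_ge_atTop 2] with m hm
      simp [(hβpos m hm).ne']
    have hsin : Tendsto (fun m : ℕ => Real.sin (c / (2*(m:ℝ))) / (c / (2*(m:ℝ)))) atTop (𝓝 1) := by
      have hd : HasDerivAt Real.sin 1 0 := by simpa using Real.hasDerivAt_sin 0
      have h := (hasDerivAt_iff_tendsto_slope.mp hd).comp hu'
      refine h.congr fun m => ?_
      simp [slope_def_field]
    have hsinh : Tendsto (fun m : ℕ => Real.sinh (β m) / β m) atTop (𝓝 1) := by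
      have hd : HasDerivAt Real.sinh 1 0 := by simpa using Real.hasDerivAt_sinh 0
      have h := (hasDerivAt_iff_tendsto_slope.mp hd).comp hβ0'
      refine h.congr fun m => ?_
      simp [slope_def_field]
    have hcomb : Tendsto (fun m : ℕ =>
        1 + (Real.sin (c / (2*(m:ℝ))) / (c / (2*(m:ℝ))) * (c / (2*(m:ℝ) * β m))
          / (Real.sinh (β m) / β m)) ^ 2) atTop (𝓝 (1 + (c/A)^2)) := by
      have h := ((hsin.mul hratio).div hsinh one_ne_zero).pow 2
      have := tendsto_const_nhds.add (f := fun _ : ℕ => (1:ℝ)) h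
      simpa using this
    have hlim : (1:ℝ) + (c/A)^2 = 1 + σ * (j:ℝ)^2 := by
      rw [hσ, hc]; field_simp
    rw [← hlim]
    refine hcomb.congr' ?_
    filter_upwards [eventually_ge_atTop 2] with m hm
    have hb := hβpos m hm
    have hs : 0 < Real.sinh (β m) := Real.sinh_pos_iff.mpr hb
    have hm2 : (2:ℝ) ≤ (m:ℝ) := by exact_mod_cast hm
    rw [hx, hK]
    have harg : (j:ℝ) * π / (2 * (m:ℝ)) = c / (2*(m:ℝ)) := by rw [hc]
    rw [harg]
    field_simp
end

section
/- Let γ > 1, β = β(m,γ) the solution of cosh((2m−1)β)/cosh β = γ, and η_m = sinh(2mβ)/((2 sinh β)^{2m−1} cosh β). Then lim_{m→∞} η_m^{1/m}/m² = 1/(cosh^{−1}γ)². -/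
open Filter

/-- with `β(m,γ)` the solution of `cosh((2m-1)β)/cosh β = γ` and
`η_m = sinh(2mβ)/((2 sinh β)^{2m-1} cosh β)`, one has
`η_m^{1/m}/m² → 1/A²` as `m → ∞`, where `A = cosh⁻¹ γ`. -/
theorem stmt18 (γ : ℝ) (hγ : 1 < γ)
    (A : ℝ) (hA : 0 ≤ A) (hAγ : Real.cosh A = γ)
    (β : ℕ → ℝ) (hβpos : ∀ m : ℕ, 2 ≤ m → 0 < β m)
    (hβγ : ∀ m : ℕ, 2 ≤ m → Real.cosh ((2 * m - 1) * β m) / Real.cosh (β m) = γ)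
    (η : ℕ → ℝ)
    (hη : ∀ m : ℕ, η m = Real.sinh (2 * m * β m)
        / ((2 * Real.sinh (β m)) ^ (2 * m - 1) * Real.cosh (β m))) :
    Tendsto (fun m : ℕ => (η m) ^ ((1 : ℝ) / m) / (m : ℝ) ^ 2)
      atTop (nhds (1 / A ^ 2)) := by
  have hγ0 : (0:ℝ) < γ := lt_trans one_pos hγ
  have hA0 : 0 < A := by
    rcases lt_or_eq_of_le hA with h | h
    · exact h
    · exfalso; rw [← h] at hAγ; simp [Real.cosh_zero] at hAγ; linarith
  have hsA : 0 < Real.sinh A := Real.sinh_pos_iff.2 hA0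
  set t : ℕ → ℝ := fun m => (2 * (m:ℝ) - 1) * β m with ht_def
  have hcosh_t : ∀ m : ℕ, 2 ≤ m → Real.cosh (t m) = γ * Real.cosh (β m) := by
    intro m hm
    have := hβγ m hm
    field_simp at this
    linarith [this]
  have ht_pos : ∀ m : ℕ, 2 ≤ m → 0 < t m := by
    intro m hm
    have h1 : (2:ℝ) ≤ (m:ℝ) := by exact_mod_cast hm
    have := hβpos m hm
    have : (0:ℝ) < 2 * (m:ℝ) - 1 := by linarith
    exact mul_pos this (hβpos m hm)
  -- Step A : β → 0
  have hβbound : ∀ m : ℕ, 2 ≤ m → β m ≤ Real.log (2*γ) / (2*(m:ℝ) - 2) := by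
    intro m hm
    have hb := hβpos m hm
    have hm2 : (2:ℝ) ≤ (m:ℝ) := by exact_mod_cast hm
    have hden : (0:ℝ) < 2*(m:ℝ) - 2 := by linarith
    have h1 : Real.exp (t m) ≤ 2 * Real.cosh (t m) := by
      rw [Real.cosh_eq]
      have := Real.exp_pos (-(t m))
      linarith
    have h2 : Real.cosh (β m) ≤ Real.exp (β m) := by
      rw [Real.cosh_eq]
      have : Real.exp (-(β m)) ≤ Real.exp (β m) := Real.exp_le_exp.2 (by linarith)
      linarith
    have h3 : Real.exp (t m) ≤ 2 * γ * Real.exp (β m) := by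
      rw [hcosh_t m hm] at h1
      nlinarith [Real.exp_pos (β m)]
    have h4 : 2 * γ * Real.exp (β m) = Real.exp (Real.log (2*γ) + β m) := by
      rw [Real.exp_add, Real.exp_log (by linarith)]
    rw [h4] at h3
    have h5 : t m ≤ Real.log (2*γ) + β m := Real.exp_le_exp.1 h3
    rw [le_div_iff₀ hden]
    have : t m - β m = β m * (2*(m:ℝ) - 2) := by rw [ht_def]; ring
    linarith [this ▸ (by linarith : t m - β m ≤ Real.log (2*γ))]
  have hβ0 : Tendsto β atTop (nhds 0) := by
    apply squeeze_zero'
    · filter_upwards [eventually_ge_atTop 2] with m hm using (hβpos m hm).le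
    · filter_upwards [eventually_ge_atTop 2] with m hm using hβbound m hm
    · apply Tendsto.div_atTop tendsto_const_nhds
      apply tendsto_atTop_add_const_right
      exact Tendsto.const_mul_atTop two_pos tendsto_natCast_atTop_atTop
  -- Step B : t → A
  have hsinh_t : Tendsto (fun m => Real.sinh (t m)) atTop (nhds (Real.sinh A)) := by
    have hg : Tendsto (fun m => Real.sqrt ((γ * Real.cosh (β m))^2 - 1)) atTop
        (nhds (Real.sinh A)) := by
      have hcoshβ : Tendsto (fun m : ℕ => Real.cosh (β m)) atTop (nhds 1) := by
        have := (Real.continuous_cosh.tendsto' 0 1 Real.cosh_zero).comp hβ0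
        simpa [Function.comp_def] using this
      have h1 : Tendsto (fun m => (γ * Real.cosh (β m))^2 - 1) atTop (nhds (γ^2 - 1)) := by
        have h5 : Tendsto (fun m : ℕ => (γ * Real.cosh (β m))^2 - 1) atTop
            (nhds ((γ * 1)^2 - 1)) :=
          ((tendsto_const_nhds.mul hcoshβ).pow 2).sub tendsto_const_nhds
        simpa using h5
      have h2 := (Real.continuous_sqrt.tendsto _).comp h1
      have h3 : Real.sqrt (γ^2 - 1) = Real.sinh A := by
        have h4 : γ^2 - 1 = Real.sinh A ^ 2 := by
          rw [← hAγ]; have := Real.cosh_sq A; linarith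
        rw [h4, Real.sqrt_sq hsA.le]
      rw [← h3]; exact h2
    apply hg.congr'
    filter_upwards [eventually_ge_atTop 2] with m hm
    have htp := ht_pos m hm
    have hst : 0 ≤ Real.sinh (t m) := (Real.sinh_pos_iff.2 htp).le
    rw [← hcosh_t m hm]
    have : Real.cosh (t m) ^ 2 - 1 = Real.sinh (t m) ^ 2 := by
      have := Real.cosh_sq (t m); linarith
    rw [this, Real.sqrt_sq hst]
  have ht_lim : Tendsto t atTop (nhds A) := by
    have := (Real.continuous_arsinh.tendsto _).comp hsinh_t
    simpa only [Function.comp_def, Real.arsinh_sinh] using this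
  -- mβ → A/2, 2mβ → A
  have h2mβ : Tendsto (fun m : ℕ => 2 * (m:ℝ) * β m) atTop (nhds A) := by
    have := ht_lim.add hβ0
    rw [add_zero] at this
    apply this.congr
    intro m; rw [ht_def]; ring
  have hmβ : Tendsto (fun m : ℕ => (m:ℝ) * β m) atTop (nhds (A / 2)) := by
    have := h2mβ.div_const 2
    apply this.congr
    intro m; ring
  -- sinh β / β → 1
  have hslope : Tendsto (fun m => Real.sinh (β m) / β m) atTop (nhds 1) := by
    have hd := Real.hasDerivAt_sinh 0
    rw [Real.cosh_zero, hasDerivAt_iff_tendsto_slope] at hd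
    have hβne : Tendsto β atTop (nhdsWithin 0 {(0:ℝ)}ᶜ) := by
      rw [tendsto_nhdsWithin_iff]
      refine ⟨hβ0, ?_⟩
      filter_upwards [eventually_ge_atTop 2] with m hm
      exact (hβpos m hm).ne'
    have := hd.comp hβne
    apply this.congr
    intro m
    simp [slope_def_field, Real.sinh_zero]
  -- c → A
  set c : ℕ → ℝ := fun m => (m:ℝ) * (2 * Real.sinh (β m)) with hc_def
  have hc : Tendsto c atTop (nhds A) := by
    have h1 := (hmβ.const_mul 2).mul hslope
    have h2 : (2 * (A/2)) * 1 = A := by ring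
    rw [h2] at h1
    apply h1.congr'
    filter_upwards [eventually_ge_atTop 2] with m hm
    have hb := (hβpos m hm).ne'
    field_simp
    ring
  have hc_pos : ∀ m : ℕ, 2 ≤ m → 0 < c m := by
    intro m hm
    have hm0 : (0:ℝ) < (m:ℝ) := by exact_mod_cast Nat.pos_of_ne_zero (by omega)
    exact mul_pos hm0 (mul_pos two_pos (Real.sinh_pos_iff.2 (hβpos m hm)))
  have hcast : Tendsto (fun m : ℕ => (m:ℝ)) atTop atTop := tendsto_natCast_atTop_atTop
  -- the exponent L
  set L : ℕ → ℝ := fun m => Real.log (Real.sinh (2 * (m:ℝ) * β m)) / m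
      - ((2 * (m:ℝ) - 1) / m) * Real.log (c m)
      - Real.log (Real.cosh (β m)) / m - Real.log m / m with hL_def
  have hL : Tendsto L atTop (nhds (0 - 2 * Real.log A - 0 - 0)) := by
    have hS : Tendsto (fun m : ℕ => Real.log (Real.sinh (2 * (m:ℝ) * β m)) / m)
        atTop (nhds 0) := by
      have h : Tendsto (fun m : ℕ => Real.log (Real.sinh (2 * (m:ℝ) * β m))) atTop
          (nhds (Real.log (Real.sinh A))) := by
        have h' := (Real.continuousAt_log hsA.ne').tendsto.comp
          ((Real.continuous_sinh.tendsto A).comp h2mβ)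
        simpa [Function.comp_def] using h'
      exact h.div_atTop hcast
    have hratio : Tendsto (fun m : ℕ => (2 * (m:ℝ) - 1) / m) atTop (nhds 2) := by
      have h1 : Tendsto (fun m : ℕ => 2 - 1 / (m:ℝ)) atTop (nhds (2 - 0)) :=
        tendsto_const_nhds.sub tendsto_one_div_atTop_nhds_zero_nat
      rw [sub_zero] at h1
      apply h1.congr'
      filter_upwards [eventually_ge_atTop 1] with m hm
      have hm0 : ((m:ℝ)) ≠ 0 := by
        have : (0:ℝ) < (m:ℝ) := by exact_mod_cast Nat.pos_of_ne_zero (by omega)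
        exact this.ne'
      field_simp
    have hlogc : Tendsto (fun m => Real.log (c m)) atTop (nhds (Real.log A)) :=
      (Real.continuousAt_log hA0.ne').tendsto.comp hc
    have h2 : Tendsto (fun m : ℕ => ((2 * (m:ℝ) - 1) / m) * Real.log (c m)) atTop
        (nhds (2 * Real.log A)) := hratio.mul hlogc
    have hC : Tendsto (fun m : ℕ => Real.log (Real.cosh (β m)) / m) atTop (nhds 0) := by
      have h : Tendsto (fun m : ℕ => Real.log (Real.cosh (β m))) atTop (nhds 0) := by
        have h' := (Real.continuousAt_log one_ne_zero).tendsto.comp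
          ((Real.continuous_cosh.tendsto' 0 1 Real.cosh_zero).comp hβ0)
        simpa [Function.comp_def, Real.log_one] using h'
      exact h.div_atTop hcast
    have hlogm : Tendsto (fun m : ℕ => Real.log (m:ℝ) / m) atTop (nhds 0) := by
      have := Real.isLittleO_log_id_atTop.tendsto_div_nhds_zero
      have := this.comp hcast
      simpa [Function.comp_def] using this
    exact ((hS.sub h2).sub hC).sub hlogm
  have hval : Real.exp (0 - 2 * Real.log A - 0 - 0) = 1 / A ^ 2 := by
    rw [show (0:ℝ) - 2 * Real.log A - 0 - 0 = -((2:ℕ) * Real.log A) by push_cast; ring,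
      ← Real.log_pow, Real.exp_neg, Real.exp_log (by positivity)]
    rw [one_div]
  have hexp : Tendsto (fun m => Real.exp (L m)) atTop (nhds (1 / A ^ 2)) := by
    rw [← hval]
    exact (Real.continuous_exp.tendsto _).comp hL
  apply hexp.congr'
  filter_upwards [eventually_ge_atTop 2] with m hm
  -- positivity facts
  have hm2 : (2:ℝ) ≤ (m:ℝ) := by exact_mod_cast hm
  have hm0 : (0:ℝ) < (m:ℝ) := by linarith
  have hb := hβpos m hm
  have hsb : 0 < Real.sinh (β m) := Real.sinh_pos_iff.2 hb
  have hcb : 0 < Real.cosh (β m) := Real.cosh_pos (β m)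
  have h2mb : 0 < 2 * (m:ℝ) * β m := by positivity
  have hs2 : 0 < Real.sinh (2 * (m:ℝ) * β m) := Real.sinh_pos_iff.2 h2mb
  have h2sb : 0 < 2 * Real.sinh (β m) := by linarith
  have hpow : 0 < (2 * Real.sinh (β m)) ^ (2 * m - 1) := pow_pos h2sb _
  have hηpos : 0 < η m := by
    rw [hη m]
    exact div_pos hs2 (mul_pos hpow hcb)
  have hcast21 : ((2 * m - 1 : ℕ) : ℝ) = 2 * (m:ℝ) - 1 := by
    have : 1 ≤ 2 * m := by omega
    push_cast [Nat.cast_sub this]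
    ring
  have hlog2s : Real.log (2 * Real.sinh (β m)) = Real.log (c m) - Real.log m := by
    rw [hc_def]
    rw [Real.log_mul hm0.ne' h2sb.ne']
    ring
  have hlogη : Real.log (η m) = Real.log (Real.sinh (2 * (m:ℝ) * β m))
      - ((2 * (m:ℝ) - 1) * (Real.log (c m) - Real.log m) + Real.log (Real.cosh (β m))) := by
    rw [hη m, Real.log_div hs2.ne' (mul_pos hpow hcb).ne',
      Real.log_mul hpow.ne' hcb.ne', Real.log_pow, hcast21, hlog2s]
  have hm2exp : ((m:ℝ)) ^ 2 = Real.exp ((2:ℕ) * Real.log (m:ℝ)) := by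
    rw [← Real.log_pow, Real.exp_log (by positivity)]
  rw [Real.rpow_def_of_pos hηpos, hm2exp, ← Real.exp_sub]
  congr 1
  rw [hlogη, hL_def]
  push_cast
  field_simp
  ring
end

section
/- Let σ > 0 be a real number, m ≥ 2, K = K(m) satisfy K ≤ 2m²σ/π², and define x_j = 1 + 2K sin²(jπ/(2m)) for 0 ≤ j ≤ m−1 and w_j = 1 + σ j². Then for all 0 ≤ j ≤ m−2, w_{j+1}/x_{j+1} ≥ w_j/x_j, i.e., the sequence (w_1,...,w_{m−1}) is subordinate to (x_1,...,x_{m−1}). -/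
open Real

set_option maxHeartbeats 1000000 in
/-- for `σ > 0`, `m ≥ 2`, `0 ≤ K ≤ 2m²σ/π²`,
`x j = 1 + 2K sin²(jπ/(2m))` and `w j = 1 + σ j²`, the ratios `w j / x j`
are nondecreasing, i.e. `(w 1, ..., w (m-1))` is subordinate to
`(x 1, ..., x (m-1))`. -/
theorem stmt19 (σ : ℝ) (hσ : 0 < σ) (m : ℕ) (hm : 2 ≤ m)
    (K : ℝ) (hK0 : 0 ≤ K) (hK : K ≤ 2 * (m : ℝ) ^ 2 * σ / π ^ 2)
    (x w : ℕ → ℝ)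
    (hx : ∀ j, x j = 1 + 2 * K * Real.sin (j * π / (2 * m)) ^ 2)
    (hw : ∀ j, w j = 1 + σ * j ^ 2) :
    ∀ j : ℕ, j ≤ m - 2 → w j / x j ≤ w (j + 1) / x (j + 1) := by
  have hπ := Real.pi_pos
  have hm' : (2 : ℝ) ≤ (m : ℝ) := by exact_mod_cast hm
  have hmpos : (0 : ℝ) < m := by linarith
  intro j hj
  obtain ⟨θ, hθdef⟩ : ∃ t : ℝ, t = π / (2 * (m : ℝ)) := ⟨_, rfl⟩
  have hθpos : 0 < θ := by rw [hθdef]; positivity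
  have hjm : (j : ℝ) + 2 ≤ (m : ℝ) := by exact_mod_cast (show j + 2 ≤ m by omega)
  have hj1 : (0 : ℝ) < (j : ℝ) + 1 := by positivity
  -- angles
  obtain ⟨a, hadef⟩ : ∃ t : ℝ, t = (j : ℝ) * θ := ⟨_, rfl⟩
  obtain ⟨b, hbdef⟩ : ∃ t : ℝ, t = ((j : ℝ) + 1) * θ := ⟨_, rfl⟩
  have ha0 : 0 ≤ a := by rw [hadef]; positivity
  have hbpi2 : b ≤ π / 2 := by
    have h1 : ((j : ℝ) + 1) * θ ≤ (m : ℝ) * θ :=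
      mul_le_mul_of_nonneg_right (by linarith) hθpos.le
    have hmθ : (m : ℝ) * θ = π / 2 := by
      rw [hθdef]; field_simp
    rw [hbdef]; linarith [h1, hmθ]
  have hab : a ≤ b := by
    rw [hadef, hbdef]
    exact mul_le_mul_of_nonneg_right (by linarith) hθpos.le
  have hb0 : 0 ≤ b := le_trans ha0 hab
  have hbpi : b ≤ π := by linarith
  have hapi : a ≤ π := le_trans hab hbpi
  have hsa0 : 0 ≤ Real.sin a := Real.sin_nonneg_of_nonneg_of_le_pi ha0 hapi
  have hsb0 : 0 ≤ Real.sin b := Real.sin_nonneg_of_nonneg_of_le_pi hb0 hbpi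
  -- concavity: sin a ≥ (j/(j+1)) sin b
  have key1 : (j : ℝ) / ((j : ℝ) + 1) * Real.sin b ≤ Real.sin a := by
    have h := strictConcaveOn_sin_Icc.concaveOn.2
      (show (0 : ℝ) ∈ Set.Icc 0 π from ⟨le_rfl, hπ.le⟩)
      (show b ∈ Set.Icc 0 π from ⟨hb0, hbpi⟩)
      (show (0 : ℝ) ≤ 1 / ((j : ℝ) + 1) by positivity)
      (show (0 : ℝ) ≤ (j : ℝ) / ((j : ℝ) + 1) by positivity)
      (by field_simp; ring)
    simp only [smul_eq_mul, Real.sin_zero, mul_zero, zero_add] at h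
    have hba : (j : ℝ) / ((j : ℝ) + 1) * b = a := by
      rw [hbdef, hadef]; field_simp
    rw [hba] at h
    linarith
  -- A: j² sin²b ≤ (j+1)² sin²a
  have FA : (j : ℝ) ^ 2 * Real.sin b ^ 2 ≤ ((j : ℝ) + 1) ^ 2 * Real.sin a ^ 2 := by
    have h1 : (j : ℝ) * Real.sin b ≤ ((j : ℝ) + 1) * Real.sin a := by
      have := mul_le_mul_of_nonneg_left key1 hj1.le
      have h2 : ((j : ℝ) + 1) * ((j : ℝ) / ((j : ℝ) + 1) * Real.sin b)
          = (j : ℝ) * Real.sin b := by field_simp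
      linarith [this, h2.symm.le]
    have h0 : 0 ≤ (j : ℝ) * Real.sin b := by positivity
    nlinarith [h1, h0]
  -- identity: sin²b − sin²a = sin(b+a)·sin(b−a)
  have ident : Real.sin b ^ 2 - Real.sin a ^ 2
      = Real.sin (b + a) * Real.sin (b - a) := by
    rw [Real.sin_add, Real.sin_sub]
    have h1 := Real.sin_sq_add_cos_sq a
    have h2 := Real.sin_sq_add_cos_sq b
    linear_combination (-(Real.sin b ^ 2)) * h1 + (Real.sin a ^ 2) * h2
  -- B: sin²b − sin²a ≤ (2j+1)θ²
  have FB : Real.sin b ^ 2 - Real.sin a ^ 2 ≤ (2 * (j : ℝ) + 1) * θ ^ 2 := by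
    rw [ident]
    have hba1 : b - a = θ := by rw [hbdef, hadef]; ring
    have hba2 : b + a = (2 * (j : ℝ) + 1) * θ := by rw [hbdef, hadef]; ring
    rw [hba1, hba2]
    have hs1 : Real.sin θ ≤ θ := Real.sin_le hθpos.le
    have hs1' : 0 ≤ Real.sin θ :=
      Real.sin_nonneg_of_nonneg_of_le_pi hθpos.le (by linarith)
    have hs2 : Real.sin ((2 * (j : ℝ) + 1) * θ) ≤ (2 * (j : ℝ) + 1) * θ :=
      Real.sin_le (by positivity)
    calc Real.sin ((2 * (j : ℝ) + 1) * θ) * Real.sin θ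
        ≤ ((2 * (j : ℝ) + 1) * θ) * Real.sin θ :=
          mul_le_mul_of_nonneg_right hs2 hs1'
      _ ≤ ((2 * (j : ℝ) + 1) * θ) * θ :=
          mul_le_mul_of_nonneg_left hs1 (by positivity)
      _ = (2 * (j : ℝ) + 1) * θ ^ 2 := by ring
  -- K bound: 2Kθ² ≤ σ
  have hKθ : 2 * K * θ ^ 2 ≤ σ := by
    have h1 : 2 * K * θ ^ 2 ≤ 2 * (2 * (m : ℝ) ^ 2 * σ / π ^ 2) * θ ^ 2 :=
      mul_le_mul_of_nonneg_right (by linarith) (sq_nonneg θ)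
    have h2 : 2 * (2 * (m : ℝ) ^ 2 * σ / π ^ 2) * θ ^ 2 = σ := by
      rw [hθdef]; field_simp
    linarith
  -- positivity of x
  have hxpos : ∀ n : ℕ, 0 < x n := by
    intro n
    rw [hx]
    have h := mul_nonneg (mul_nonneg (by norm_num : (0:ℝ) ≤ 2) hK0)
      (sq_nonneg (Real.sin ((n : ℝ) * π / (2 * m))))
    nlinarith [h]
  have hxj : 0 < x j := hxpos j
  have hxj1 : 0 < x (j + 1) := hxpos (j + 1)
  rw [div_le_div_iff₀ hxj hxj1, hx, hx, hw, hw]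
  have e1 : ((j : ℕ) : ℝ) * π / (2 * m) = a := by rw [hadef, hθdef]; ring
  have e2 : (((j + 1 : ℕ)) : ℝ) * π / (2 * m) = b := by
    rw [hbdef, hθdef]; push_cast; ring
  rw [e1, e2]
  push_cast
  have P1 := mul_le_mul_of_nonneg_left FB (by positivity : (0 : ℝ) ≤ 2 * K)
  have P2 := mul_le_mul_of_nonneg_left FA (by positivity : (0 : ℝ) ≤ 2 * K * σ)
  have P3 := mul_le_mul_of_nonneg_right hKθ
    (by positivity : (0 : ℝ) ≤ 2 * (j : ℝ) + 1)
  nlinarith [P1, P2, P3, hσ.le]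
end
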